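/- arXiv:2209.15273 — 7 statements merged into one kernel-verified Lean document; each statement's English description precedes it below -/
import Mathlib

section
/- Let y ∈ ℂ^M, A ∈ ℂ^{M×N} with columns a_1, …, a_N, and λ > 0. A vector x̂ ∈ ℂ^N is a global minimizer of the complex LASSO objective x ↦ (1/2)‖y − Ax‖₂² + λ·∑_{i=1}^N |x_i| if and only if for every i ∈ {1, …, N}: (i) if x̂_i ≠ 0 then a_i^H (y − A x̂) = λ · x̂_i / |x̂_i|, and (ii) if x̂_i = 0 then |a_i^H (y − A x̂)| ≤ λ. -/
open Matrix Finset
set_option maxHeartbeats 1000000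

noncomputable def lassoObj {M N : ℕ} (y : Fin M → ℂ) (A : Matrix (Fin M) (Fin N) ℂ)
    (lam : ℝ) (x : Fin N → ℂ) : ℝ :=
  (1 / 2) * ∑ j, ‖y j - A.mulVec x j‖ ^ 2 + lam * ∑ i, ‖x i‖

lemma normSub (a b : ℂ) : ‖a - b‖^2 = ‖a‖^2 - 2*((starRingEnd ℂ a) * b).re + ‖b‖^2 := by
  simp [Complex.sq_norm, Complex.normSq_apply, Complex.sub_re,
    Complex.sub_im, Complex.mul_re]
  ring

lemma cross_sum {M N : ℕ} (A : Matrix (Fin M) (Fin N) ℂ) (r : Fin M → ℂ) (d : Fin N → ℂ) :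
    ∑ j, ((starRingEnd ℂ) (r j) * A.mulVec d j) = ∑ i, ((starRingEnd ℂ) (Aᴴ.mulVec r i) * d i) := by
  simp only [Matrix.mulVec, dotProduct, Matrix.conjTranspose_apply, Finset.mul_sum, map_sum,
    _root_.map_mul, Finset.sum_mul, starRingEnd_apply, star_star]
  rw [Finset.sum_comm]
  apply Finset.sum_congr rfl; intro i _
  apply Finset.sum_congr rfl; intro j _
  ring

lemma single_mulVec {M N : ℕ} (A : Matrix (Fin M) (Fin N) ℂ) (i : Fin N) (d : ℂ) (j : Fin M) :
    A.mulVec (Pi.single i d) j = A j i * d := by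
  simp [Matrix.mulVec, dotProduct, Pi.single_apply]

lemma expand {M N : ℕ} (y : Fin M → ℂ) (A : Matrix (Fin M) (Fin N) ℂ)
    (lam : ℝ) (xh x : Fin N → ℂ) :
    lassoObj y A lam x = lassoObj y A lam xh
      + (1/2) * ∑ j, ‖A.mulVec (x - xh) j‖^2
      - ∑ i, ((starRingEnd ℂ) (Aᴴ.mulVec (y - A.mulVec xh) i) * (x i - xh i)).re
      + lam * ∑ i, (‖x i‖ - ‖xh i‖) := by
  have hd : ∀ j, y j - A.mulVec x j = (y - A.mulVec xh) j - A.mulVec (x - xh) j := by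
    intro j; simp [Matrix.mulVec_sub]
  have h1 : ∑ j, ‖y j - A.mulVec x j‖^2
      = ∑ j, ‖(y - A.mulVec xh) j‖^2
        - 2 * ∑ j, ((starRingEnd ℂ) ((y - A.mulVec xh) j) * A.mulVec (x - xh) j).re
        + ∑ j, ‖A.mulVec (x - xh) j‖^2 := by
    have e : ∑ j, ‖y j - A.mulVec x j‖^2 = ∑ j, (‖(y - A.mulVec xh) j‖^2
        - 2*((starRingEnd ℂ) ((y - A.mulVec xh) j) * A.mulVec (x - xh) j).re
        + ‖A.mulVec (x - xh) j‖^2) := by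
      apply Finset.sum_congr rfl; intro j _; rw [hd j, normSub]
    rw [e, Finset.sum_add_distrib, Finset.sum_sub_distrib, ← Finset.mul_sum]
  have h2 : ∑ j, ((starRingEnd ℂ) ((y - A.mulVec xh) j) * A.mulVec (x - xh) j).re
      = ∑ i, ((starRingEnd ℂ) (Aᴴ.mulVec (y - A.mulVec xh) i) * (x i - xh i)).re := by
    rw [← Complex.re_sum, ← Complex.re_sum, cross_sum]
    rfl
  simp only [lassoObj, h1, h2]
  rw [Finset.sum_sub_distrib]
  simp only [Pi.sub_apply]
  ring

lemma key {M N : ℕ} (y : Fin M → ℂ) (A : Matrix (Fin M) (Fin N) ℂ) (lam : ℝ)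
    (xh : Fin N → ℂ) (hmin : ∀ x, lassoObj y A lam xh ≤ lassoObj y A lam x)
    (i : Fin N) (d : ℂ) :
    0 ≤ (1/2) * (‖d‖^2 * ∑ j, ‖A j i‖^2)
      - ((starRingEnd ℂ) (Aᴴ.mulVec (y - A.mulVec xh) i) * d).re
      + lam * (‖xh i + d‖ - ‖xh i‖) := by
  have hx := hmin (xh + Pi.single i d)
  have hE := expand y A lam xh (xh + Pi.single i d)
  have hsub : (xh + Pi.single i d) - xh = Pi.single i d := by
    funext k; simp
  rw [hsub] at hE
  simp only [Pi.add_apply] at hE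
  have hA : ∑ j, ‖A.mulVec (Pi.single i d) j‖^2 = ‖d‖^2 * ∑ j, ‖A j i‖^2 := by
    rw [Finset.mul_sum]; apply Finset.sum_congr rfl; intro j _
    rw [single_mulVec, norm_mul, mul_pow]; ring
  have hc : ∑ k, ((starRingEnd ℂ) (Aᴴ.mulVec (y - A.mulVec xh) k)
        * (xh k + (Pi.single i d : Fin N → ℂ) k - xh k)).re
      = ((starRingEnd ℂ) (Aᴴ.mulVec (y - A.mulVec xh) i) * d).re := by
    rw [Finset.sum_eq_single i]
    · simp
    · intro k _ hk; simp [Pi.single_eq_of_ne hk]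
    · simp
  have hn : ∑ k, (‖xh k + (Pi.single i d : Fin N → ℂ) k‖ - ‖xh k‖) = ‖xh i + d‖ - ‖xh i‖ := by
    rw [Finset.sum_eq_single i]
    · simp
    · intro k _ hk; simp [Pi.single_eq_of_ne hk]
    · simp
  rw [hA, hc, hn] at hE
  linarith

lemma normAdd (a b : ℂ) : ‖a + b‖^2 = ‖a‖^2 + 2*((starRingEnd ℂ a) * b).re + ‖b‖^2 := by
  have := normSub a (-b)
  simp only [sub_neg_eq_add, mul_neg, Complex.neg_re, norm_neg] at this
  linarith

lemma reRealMul (t : ℝ) (a b : ℂ) : (a * ((t:ℂ) * b)).re = t * (a * b).re := by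
  simp [Complex.mul_re, Complex.mul_im]; ring

lemma realMulRe (t : ℝ) (z : ℂ) : ((t:ℂ) * z).re = t * z.re := by
  simp [Complex.mul_re]

lemma conjSelfRe (z : ℂ) : ((starRingEnd ℂ) z * z).re = ‖z‖^2 := by
  simp [Complex.sq_norm, Complex.normSq_apply, Complex.mul_re]

lemma normRealSq (t : ℝ) : ‖(t:ℂ)‖^2 = t^2 := by
  rw [Complex.norm_real, Real.norm_eq_abs, sq_abs]

lemma reLeNorm (a z : ℂ) : ((starRingEnd ℂ a) * z).re ≤ ‖a‖ * ‖z‖ := by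
  calc ((starRingEnd ℂ a) * z).re ≤ ‖(starRingEnd ℂ a) * z‖ := Complex.re_le_norm _
  _ = ‖a‖ * ‖z‖ := by simp

lemma small (a K : ℝ) (hK : 0 ≤ K) (h : ∀ t : ℝ, 0 < t → a ≤ t * K) : a ≤ 0 := by
  have h2 : ∀ ε : ℝ, 0 < ε → a ≤ 0 + ε := by
    intro ε hε
    have ht : (0:ℝ) < ε / (K + 1) := by positivity
    have := h _ ht
    have h3 : ε / (K + 1) * K ≤ ε := by
      rw [div_mul_eq_mul_div, div_le_iff₀ (by linarith)]
      nlinarith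
    linarith
  exact le_of_forall_pos_le_add h2

/-- `x̂` is a global minimizer of the complex LASSO objective iff for every `i`,
(i) `x̂ᵢ ≠ 0 → aᵢᴴ(y − Ax̂) = λ·x̂ᵢ/|x̂ᵢ|` and (ii) `x̂ᵢ = 0 → |aᵢᴴ(y − Ax̂)| ≤ λ`. -/
theorem lasso_optimality_conditions {M N : ℕ} (y : Fin M → ℂ)
    (A : Matrix (Fin M) (Fin N) ℂ) (lam : ℝ) (hlam : 0 < lam) (xh : Fin N → ℂ) :
    (∀ x : Fin N → ℂ, lassoObj y A lam xh ≤ lassoObj y A lam x) ↔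
      ∀ i : Fin N,
        (xh i ≠ 0 →
          Aᴴ.mulVec (y - A.mulVec xh) i = (lam : ℂ) * xh i / (‖xh i‖ : ℂ)) ∧
        (xh i = 0 → ‖Aᴴ.mulVec (y - A.mulVec xh) i‖ ≤ lam) := by
  constructor
  · intro hmin i
    set c := Aᴴ.mulVec (y - A.mulVec xh) i with hc
    set S := ∑ j, ‖A j i‖^2 with hSdef
    have hS : 0 ≤ S := by
      rw [hSdef]; positivity
    constructor
    · -- case xh i ≠ 0
      intro hz
      have hu : 0 < ‖xh i‖ := norm_pos_iff.2 hz
      set u := ‖xh i‖ with hudef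
      set b := (u:ℂ) * c - (lam:ℂ) * xh i with hbdef
      set B := ‖b‖^2 with hBdef
      have hB : 0 ≤ B := sq_nonneg _
      -- key identity: u * Re(conj c * b) = B + lam * Re(conj (xh i) * b)
      have f4 : u * ((starRingEnd ℂ) c * b).re
          = B + lam * ((starRingEnd ℂ) (xh i) * b).re := by
        have e1 : (starRingEnd ℂ) b * b
            = (u:ℂ) * ((starRingEnd ℂ) c * b) - (lam:ℂ) * ((starRingEnd ℂ) (xh i) * b) := by
          rw [hbdef, map_sub, _root_.map_mul, _root_.map_mul, Complex.conj_ofReal,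
            Complex.conj_ofReal]
          ring
        have e2 := congrArg Complex.re e1
        rw [conjSelfRe, Complex.sub_re, realMulRe, realMulRe] at e2
        rw [← hBdef] at e2
        linarith
      have hKnn : 0 ≤ u * B * S / 2 + lam * B / 2 := by
        have := mul_nonneg (mul_nonneg hu.le hB) hS
        nlinarith
      have hb2 : B ≤ 0 := by
        apply small _ _ hKnn
        intro t ht
        have hkey := key y A lam xh hmin i ((t:ℂ) * b)
        rw [← hc] at hkey
        have f1 : ‖(t:ℂ) * b‖^2 = t^2 * B := by
          rw [norm_mul, mul_pow, normRealSq, hBdef]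
        have f2 : ((starRingEnd ℂ) c * ((t:ℂ) * b)).re = t * ((starRingEnd ℂ) c * b).re :=
          reRealMul t _ b
        set X := ‖xh i + (t:ℂ)*b‖ with hXdef
        set r := ((starRingEnd ℂ) (xh i) * b).re with hrdef
        have hexp : X^2 = u^2 + 2*t*r + t^2*B := by
          rw [hXdef, normAdd, reRealMul, f1, ← hudef, ← hrdef]; ring
        have hq : 0 ≤ (X - u)^2 := sq_nonneg _
        have h2u : 2*u*X ≤ 2*u^2 + 2*t*r + t^2*B := by nlinarith
        rw [f1, f2] at hkey
        -- hkey : 0 ≤ 1/2*(t^2*B*S) - t*(conj c * b).re + lam*(X - u)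
        nlinarith [mul_nonneg hu.le hkey, mul_le_mul_of_nonneg_left h2u hlam.le,
          mul_pos ht hu, mul_pos ht hlam, f4, mul_le_mul_of_nonneg_left f4.le ht.le,
          mul_le_mul_of_nonneg_left f4.ge ht.le]
      have hb0 : b = 0 := by
        have hBz : ‖b‖ = 0 := by
          have := norm_nonneg b
          nlinarith
        exact norm_eq_zero.1 hBz
      have huC : ((u:ℝ) : ℂ) ≠ 0 := by
        exact_mod_cast hu.ne'
      rw [hbdef, sub_eq_zero] at hb0
      rw [eq_div_iff huC]
      rw [← hb0]; ring
    · -- case xh i = 0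
      intro hz
      by_cases hc0 : c = 0
      · rw [hc0]; simp; linarith
      have hcn : 0 < ‖c‖ := norm_pos_iff.2 hc0
      have h2 : ∀ ε : ℝ, 0 < ε → ‖c‖ ≤ lam + ε := by
        intro ε hε
        set t := 2*ε/(S+1) with htdef
        have hS1 : 0 < S + 1 := by linarith
        have ht : 0 < t := div_pos (by linarith) hS1
        have hkey := key y A lam xh hmin i (((t/‖c‖ : ℝ) : ℂ) * c)
        rw [← hc, hz] at hkey
        have f1 : ‖((t/‖c‖ : ℝ) : ℂ) * c‖ = t := by
          rw [norm_mul, Complex.norm_real, Real.norm_eq_abs, abs_of_pos (div_pos ht hcn),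
            div_mul_cancel₀ _ hcn.ne']
        have hmm : t/‖c‖ * ‖c‖^2 = t * ‖c‖ := by
          rw [pow_two, ← mul_assoc, div_mul_cancel₀ _ hcn.ne']
        have f2 : ((starRingEnd ℂ) c * (((t/‖c‖ : ℝ) : ℂ) * c)).re = t * ‖c‖ := by
          rw [reRealMul, conjSelfRe, hmm]
        rw [f1, f2] at hkey
        simp only [zero_add, norm_zero, sub_zero] at hkey
        rw [← hSdef] at hkey
        -- hkey : 0 ≤ 1/2*(t^2*S) - t*‖c‖ + lam*t
        have htS : t * (S + 1) = 2*ε := by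
          rw [htdef]; field_simp
        nlinarith [mul_pos ht hcn, hkey, htS, mul_pos ht ht, mul_pos ht hε]
      linarith [le_of_forall_pos_le_add h2]
  · intro h x
    rw [expand y A lam xh x]
    have hT1 : 0 ≤ (1/2) * ∑ j, ‖A.mulVec (x - xh) j‖^2 := by positivity
    have hT2 : ∑ i, ((starRingEnd ℂ) (Aᴴ.mulVec (y - A.mulVec xh) i) * (x i - xh i)).re
        ≤ lam * ∑ i, (‖x i‖ - ‖xh i‖) := by
      rw [Finset.mul_sum]
      apply Finset.sum_le_sum
      intro i _
      by_cases hz : xh i = 0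
      · have hci := (h i).2 hz
        have h1 := reLeNorm (Aᴴ.mulVec (y - A.mulVec xh) i) (x i - xh i)
        rw [hz, sub_zero] at h1 ⊢
        simp only [norm_zero]
        nlinarith [norm_nonneg (x i), norm_nonneg (Aᴴ.mulVec (y - A.mulVec xh) i),
          mul_le_mul_of_nonneg_right hci (norm_nonneg (x i))]
      · have hci := (h i).1 hz
        have hu : 0 < ‖xh i‖ := norm_pos_iff.2 hz
        have huC : ((‖xh i‖:ℝ) : ℂ) ≠ 0 := by exact_mod_cast hu.ne'
        have hceq : (‖xh i‖ : ℝ) * ((starRingEnd ℂ) (Aᴴ.mulVec (y - A.mulVec xh) i)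
              * (x i - xh i)).re
            = lam * ((starRingEnd ℂ) (xh i) * (x i - xh i)).re := by
          have e1 : ((‖xh i‖:ℝ) : ℂ) * ((starRingEnd ℂ) (Aᴴ.mulVec (y - A.mulVec xh) i)
                * (x i - xh i))
              = (lam:ℂ) * ((starRingEnd ℂ) (xh i) * (x i - xh i)) := by
            rw [hci, map_div₀, _root_.map_mul, Complex.conj_ofReal, Complex.conj_ofReal]
            rw [div_mul_eq_mul_div, mul_div_assoc']
            rw [mul_div_cancel_left₀ _ huC]
            ring
          have e2 := congrArg Complex.re e1
          rw [realMulRe, realMulRe] at e2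
          exact e2
        have h1 : ((starRingEnd ℂ) (xh i) * (x i - xh i)).re ≤ ‖xh i‖ * ‖x i‖ - ‖xh i‖^2 := by
          rw [mul_sub, Complex.sub_re, conjSelfRe]
          have := reLeNorm (xh i) (x i)
          nlinarith
        nlinarith [hceq, h1, mul_pos hlam hu, norm_nonneg (x i),
          mul_le_mul_of_nonneg_left h1 hlam.le]
    linarith
end

section
/- Let y ∈ ℂ^M, A ∈ ℂ^{M×N}, λ > 0, and let x̂ be a global minimizer of the complex LASSO objective x ↦ (1/2)‖y − Ax‖₂² + λ‖x‖₁. Then for every i ∈ {1, …, N}, |a_i^H (y − A x̂)| ≤ λ, where a_i is the i-th column of A. -/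
open Matrix Finset

lemma norm_sub_sq_complex (z w : ℂ) :
    ‖z - w‖ ^ 2 = ‖z‖ ^ 2 - 2 * (z * (starRingEnd ℂ) w).re + ‖w‖ ^ 2 := by
  have h := Complex.normSq_sub z w
  rw [← Complex.normSq_eq_norm_sq, ← Complex.normSq_eq_norm_sq, ← Complex.normSq_eq_norm_sq, h]
  ring

/-- if `x̂` is a global minimizer of the complex LASSO objective, then for every
`i`, `|aᵢᴴ(y − Ax̂)| ≤ λ` where `aᵢ` is the `i`-th column of `A`. -/
theorem lasso_residual_correlation_le {M N : ℕ} (y : Fin M → ℂ)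
    (A : Matrix (Fin M) (Fin N) ℂ) (lam : ℝ) (hlam : 0 < lam) (xh : Fin N → ℂ)
    (hmin : ∀ x : Fin N → ℂ, lassoObj y A lam xh ≤ lassoObj y A lam x) :
    ∀ i : Fin N, ‖Aᴴ.mulVec (y - A.mulVec xh) i‖ ≤ lam := by
  intro i
  by_contra hcon
  push_neg at hcon
  set r : Fin M → ℂ := y - A.mulVec xh with hr
  set g : ℂ := Aᴴ.mulVec r i with hg
  have hgne : g ≠ 0 := by
    intro h
    rw [h] at hcon
    simp at hcon; linarith
  have hgnorm : (0:ℝ) < ‖g‖ := norm_pos_iff.mpr hgne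
  set c : ℂ := (‖g‖ : ℂ)⁻¹ * g with hc
  have hcnorm : ‖c‖ = 1 := by
    have habs : ‖g‖ ≠ 0 := by exact hgnorm.ne'
    rw [hc, norm_mul, norm_inv, Complex.norm_real, Real.norm_of_nonneg hgnorm.le]
    field_simp
  set S : ℝ := ∑ j, ‖A j i‖ ^ 2 with hS
  have hSpos : 0 < S := by
    rcases lt_or_eq_of_le (Finset.sum_nonneg fun j _ => sq_nonneg ‖A j i‖ : (0:ℝ) ≤ S) with h | h
    · exact h
    · exfalso; apply hgne
      have hz : ∀ j, A j i = 0 := by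
        intro j
        have := (Finset.sum_eq_zero_iff_of_nonneg (fun j _ => sq_nonneg ‖A j i‖)).mp h.symm j
          (Finset.mem_univ j)
        simpa [pow_eq_zero_iff] using this
      simp [hg, Matrix.mulVec, dotProduct, Matrix.conjTranspose_apply, hz]
  set t : ℝ := (‖g‖ - lam) / S with htdef
  have ht : 0 < t := div_pos (by linarith) hSpos
  have htS : t * S = ‖g‖ - lam := div_mul_cancel₀ _ hSpos.ne'
  set d : Fin N → ℂ := Pi.single i ((t : ℂ) * c) with hd
  set x : Fin N → ℂ := xh + d with hx
  have hAx : ∀ j, A.mulVec x j = A.mulVec xh j + A j i * ((t:ℂ) * c) := by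
    intro j
    rw [hx, Matrix.mulVec_add, hd, Matrix.mulVec_single]
    simp
  have hgsum : ∑ j, r j * (starRingEnd ℂ) (A j i) = g := by
    rw [hg]
    simp [Matrix.mulVec, dotProduct, Matrix.conjTranspose_apply, mul_comm]
  have hgc : g * (starRingEnd ℂ) c = (‖g‖ : ℂ) := by
    rw [hc, _root_.map_mul, mul_comm ((starRingEnd ℂ) _), ← mul_assoc, Complex.mul_conj,
      Complex.conj_inv, Complex.conj_ofReal, Complex.normSq_eq_norm_sq]
    have habs : ‖g‖ ≠ 0 := by exact hgnorm.ne'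
    push_cast
    field_simp
  have hrj : ∀ j, y j - A.mulVec xh j = r j := by intro j; simp [hr]
  have hQ : ∑ j, ‖y j - A.mulVec x j‖ ^ 2
      = (∑ j, ‖y j - A.mulVec xh j‖ ^ 2) - 2 * (t * ‖g‖) + t ^ 2 * S := by
    have step : ∀ j, ‖y j - A.mulVec x j‖ ^ 2
        = ‖r j‖ ^ 2 - 2 * (r j * (starRingEnd ℂ) (A j i * ((t:ℂ) * c))).re
          + t ^ 2 * ‖A j i‖ ^ 2 := by
      intro j
      have h1 : y j - A.mulVec x j = r j - A j i * ((t:ℂ) * c) := by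
        rw [hAx, ← hrj j]; ring
      rw [h1, norm_sub_sq_complex]
      have h2 : ‖A j i * ((t:ℂ) * c)‖ ^ 2 = t ^ 2 * ‖A j i‖ ^ 2 := by
        rw [norm_mul, norm_mul, hcnorm, Complex.norm_real, Real.norm_of_nonneg ht.le]
        ring
      rw [h2]
    rw [Finset.sum_congr rfl fun j _ => step j]
    rw [Finset.sum_add_distrib, Finset.sum_sub_distrib, ← Finset.mul_sum, ← Finset.mul_sum,
      ← Complex.re_sum]
    have h3 : ∑ j, r j * (starRingEnd ℂ) (A j i * ((t:ℂ) * c)) = (t : ℂ) * (‖g‖ : ℂ) := by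
      calc ∑ j, r j * (starRingEnd ℂ) (A j i * ((t:ℂ) * c))
          = (∑ j, r j * (starRingEnd ℂ) (A j i)) * (starRingEnd ℂ) ((t:ℂ) * c) := by
            rw [Finset.sum_mul]; exact Finset.sum_congr rfl fun j _ => by rw [_root_.map_mul]; ring
        _ = (t : ℂ) * (g * (starRingEnd ℂ) c) := by
            rw [hgsum, _root_.map_mul, Complex.conj_ofReal]; ring
        _ = (t : ℂ) * (‖g‖ : ℂ) := by rw [hgc]
    rw [h3]
    have h4 : ((t : ℂ) * (‖g‖ : ℂ)).re = t * ‖g‖ := by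
      rw [← Complex.ofReal_mul, Complex.ofReal_re]
    rw [h4]
    simp only [hrj]
    try ring
  have hL : ∑ k, ‖x k‖ ≤ (∑ k, ‖xh k‖) + t := by
    have h1 : ∑ k, ‖x k‖ ≤ ∑ k, (‖xh k‖ + ‖d k‖) := by
      apply Finset.sum_le_sum
      intro k _
      rw [hx]
      exact norm_add_le _ _
    have h2 : ∑ k, ‖d k‖ = t := by
      rw [hd]
      rw [Finset.sum_eq_single i]
      · rw [Pi.single_eq_same, norm_mul, hcnorm, Complex.norm_real,
          Real.norm_of_nonneg ht.le, mul_one]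
      · intro b _ hb; simp [Pi.single_eq_of_ne hb]
      · intro h; exact absurd (Finset.mem_univ i) h
    rw [Finset.sum_add_distrib, h2] at h1
    exact h1
  have key := hmin x
  unfold lassoObj at key
  rw [hQ] at key
  nlinarith [mul_pos ht (sub_pos.mpr hcon), mul_le_mul_of_nonneg_left hL hlam.le,
    sq_nonneg t, mul_pos ht hgnorm]
end

section
/- Let y ∈ ℂ^M, A ∈ ℂ^{M×N}, λ > 0, let x̂ be a global minimizer of the complex LASSO objective, and let Λ > 0. Define the debiased LASSO estimator x̂^d = x̂ + (1/Λ) A^H (y − A x̂). Then for every index i with x̂_i ≠ 0, the i-th entry satisfies |x̂^d_i| = |x̂_i| + λ/Λ. -/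
open Matrix Finset

/-- The debiased LASSO estimator `x̂ᵈ = x̂ + (1/Λ) Aᴴ(y − Ax̂)`. -/
noncomputable def debiasedLasso {M N : ℕ} (y : Fin M → ℂ) (A : Matrix (Fin M) (Fin N) ℂ)
    (Lam : ℝ) (xh : Fin N → ℂ) : Fin N → ℂ :=
  xh + (1 / Lam : ℝ) • Aᴴ.mulVec (y - A.mulVec xh)


lemma re_mul_conj_comm (z w : ℂ) : (z * (starRingEnd ℂ) w).re = (w * (starRingEnd ℂ) z).re := by
  simp [Complex.mul_re, Complex.conj_re, Complex.conj_im]; ring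

lemma norm_add_le_aux (a c : ℂ) (ha : a ≠ 0) :
    ‖a + c‖ ≤ ‖a‖ + (c * (starRingEnd ℂ) a).re / ‖a‖ + ‖c‖ ^ 2 / (2 * ‖a‖) := by
  have hb : (0:ℝ) < ‖a‖ := norm_pos_iff.mpr ha
  have hre : |(c * (starRingEnd ℂ) a).re| ≤ ‖c‖ * ‖a‖ := by
    calc |(c * (starRingEnd ℂ) a).re| ≤ ‖c * (starRingEnd ℂ) a‖ := Complex.abs_re_le_norm _
    _ = ‖c‖ * ‖a‖ := by rw [norm_mul, RCLike.norm_conj]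
  set R := (c * (starRingEnd ℂ) a).re with hR
  have hRlb : -(‖c‖ * ‖a‖) ≤ R := neg_le_of_abs_le hre
  have hRHS : 0 ≤ ‖a‖ + R / ‖a‖ + ‖c‖ ^ 2 / (2 * ‖a‖) := by
    have key : ∀ b : ℝ, b ≠ 0 → (b + R / b + ‖c‖ ^ 2 / (2 * b)) * (2 * b)
        = 2 * b^2 + 2 * R + ‖c‖^2 := by intro b hb0; field_simp
    have key := key ‖a‖ hb.ne'
    nlinarith [sq_nonneg (‖a‖ - ‖c‖), sq_nonneg ‖a‖]
  have e1 : ‖a + c‖ ^ 2 = ‖a‖^2 + ‖c‖^2 + 2 * R := by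
    rw [Complex.sq_norm,
      Complex.sq_norm, Complex.sq_norm, Complex.normSq_add, hR, re_mul_conj_comm]
  have gen : ∀ b n r : ℝ, 0 < b → b^2+n^2+2*r ≤ (b + r/b + n^2/(2*b))^2 := by
    intro b n r hb0
    have key : (b + r/b + n^2/(2*b))^2 - (b^2+n^2+2*r) = (r + n^2/2)^2 / b^2 := by
      field_simp; ring
    nlinarith [div_nonneg (sq_nonneg (r + n^2/2)) (sq_nonneg b)]
  have hsq : ‖a + c‖ ^ 2 ≤ (‖a‖ + R / ‖a‖ + ‖c‖ ^ 2 / (2 * ‖a‖)) ^ 2 := by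
    rw [e1]; exact gen _ _ _ hb
  calc ‖a + c‖ = Real.sqrt (‖a + c‖ ^ 2) := (Real.sqrt_sq (norm_nonneg _)).symm
  _ ≤ Real.sqrt ((‖a‖ + R / ‖a‖ + ‖c‖ ^ 2 / (2 * ‖a‖)) ^ 2) := Real.sqrt_le_sqrt hsq
  _ = _ := Real.sqrt_sq hRHS


lemma lasso_perturb {M N : ℕ} (y : Fin M → ℂ) (A : Matrix (Fin M) (Fin N) ℂ)
    (lam : ℝ) (xh : Fin N → ℂ) (i : Fin N) (c : ℂ) :
    lassoObj y A lam (xh + c • (Pi.single i 1 : Fin N → ℂ)) =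
      lassoObj y A lam xh
        - (c * (starRingEnd ℂ) (Aᴴ.mulVec (y - A.mulVec xh) i)).re
        + ‖c‖ ^ 2 * (∑ j, ‖A j i‖ ^ 2) / 2
        + lam * (‖xh i + c‖ - ‖xh i‖) := by
  set res : Fin M → ℂ := y - A.mulVec xh with hres
  have hmv : ∀ j, A.mulVec (xh + c • (Pi.single i 1 : Fin N → ℂ)) j
      = A.mulVec xh j + c * A j i := by
    intro j
    rw [Matrix.mulVec_add, Matrix.mulVec_smul]
    simp [Matrix.mulVec_single, mul_comm]
  have hquad : ∀ j, ‖y j - A.mulVec (xh + c • (Pi.single i 1 : Fin N → ℂ)) j‖ ^ 2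
      = ‖res j‖^2 + ‖c‖^2 * ‖A j i‖^2 - 2 * (c * A j i * (starRingEnd ℂ) (res j)).re := by
    intro j
    rw [hmv j]
    have h1 : y j - (A.mulVec xh j + c * A j i) = res j - c * A j i := by
      simp [hres]; ring
    rw [h1]
    rw [Complex.sq_norm, Complex.sq_norm,
      Complex.normSq_sub]
    rw [show ‖c‖^2 * ‖A j i‖^2 = Complex.normSq (c * A j i) by
      rw [Complex.normSq_mul, Complex.sq_norm,
        Complex.sq_norm]]
    have h2 : (res j * (starRingEnd ℂ) (c * A j i)).re
        = (c * A j i * (starRingEnd ℂ) (res j)).re := by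
      simp [Complex.mul_re, Complex.conj_re, Complex.conj_im, Complex.mul_im]; ring
    rw [h2]
  have hcr : (c * (starRingEnd ℂ) (Aᴴ.mulVec res i))
      = ∑ j, c * A j i * (starRingEnd ℂ) (res j) := by
    rw [Matrix.mulVec, dotProduct, map_sum, Finset.mul_sum]
    refine Finset.sum_congr rfl fun j _ => ?_
    rw [Matrix.conjTranspose_apply, _root_.map_mul]
    simp only [RCLike.star_def, Complex.conj_conj]
    ring
  have hl1 : ∑ i', ‖(xh + c • (Pi.single i 1 : Fin N → ℂ)) i'‖
      = ∑ i', ‖xh i'‖ + (‖xh i + c‖ - ‖xh i‖) := by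
    have : ∀ i', ‖(xh + c • (Pi.single i 1 : Fin N → ℂ)) i'‖ - ‖xh i'‖
        = if i' = i then ‖xh i + c‖ - ‖xh i‖ else 0 := by
      intro i'
      by_cases h : i' = i
      · subst h; simp [Pi.single_apply]
      · simp [Pi.single_apply, h]
    have : ∑ i', (‖(xh + c • (Pi.single i 1 : Fin N → ℂ)) i'‖ - ‖xh i'‖) = ∑ i', if i' = i then ‖xh i + c‖ - ‖xh i‖ else 0 := Finset.sum_congr rfl (fun i' _ => this i')
    rw [Finset.sum_sub_distrib] at this
    rw [Finset.sum_ite_eq' univ i (fun _ => ‖xh i + c‖ - ‖xh i‖)] at this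
    simp only [Finset.mem_univ, if_true] at this
    linarith
  unfold lassoObj
  rw [hl1]
  rw [Finset.sum_congr rfl (fun j _ => hquad j)]
  rw [Finset.sum_sub_distrib, Finset.sum_add_distrib, ← Finset.mul_sum, ← Finset.mul_sum,
    ← Complex.re_sum, ← hcr]
  have : ∀ j, y j - A.mulVec xh j = res j := fun j => by simp [hres]
  rw [Finset.sum_congr rfl (fun j _ => by rw [this j] : ∀ j ∈ univ, ‖y j - A.mulVec xh j‖^2 = ‖res j‖^2)]
  ring


set_option maxHeartbeats 1000000 in
/-- for every index `i` with `x̂ᵢ ≠ 0`, the debiased LASSO estimator satisfies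
`|x̂ᵈᵢ| = |x̂ᵢ| + λ/Λ`. -/
theorem debiasedLasso_abs_eq_of_ne_zero {M N : ℕ} (y : Fin M → ℂ)
    (A : Matrix (Fin M) (Fin N) ℂ) (lam : ℝ) (hlam : 0 < lam) (xh : Fin N → ℂ)
    (hmin : ∀ x : Fin N → ℂ, lassoObj y A lam xh ≤ lassoObj y A lam x)
    (Lam : ℝ) (hLam : 0 < Lam) :
    ∀ i : Fin N, xh i ≠ 0 → ‖debiasedLasso y A Lam xh i‖ = ‖xh i‖ + lam / Lam := by
  intro i hi
  set r : ℂ := Aᴴ.mulVec (y - A.mulVec xh) i with hr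
  set K : ℝ := ∑ j, ‖A j i‖ ^ 2 with hK
  have hK0 : 0 ≤ K := Finset.sum_nonneg fun j _ => sq_nonneg _
  set b : ℝ := ‖xh i‖ with hb
  have hb0 : (0:ℝ) < b := norm_pos_iff.mpr hi
  have key : ∀ c : ℂ, 0 ≤ -(c * (starRingEnd ℂ) r).re + ‖c‖^2 * K / 2
      + lam * (‖xh i + c‖ - ‖xh i‖) := by
    intro c
    have h := hmin (xh + c • (Pi.single i 1 : Fin N → ℂ))
    rw [lasso_perturb y A lam xh i c] at h
    linarith
  set s : ℂ := ((lam / b : ℝ) : ℂ) * xh i with hs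
  have hw0 : r - s = 0 := by
    by_contra hne
    set w : ℂ := r - s with hw
    have hwpos : 0 < ‖w‖ := norm_pos_iff.mpr hne
    set C : ℝ := K / 2 + lam / (2 * b) with hC
    have hC0 : 0 < C := by rw [hC]; have h1 : 0 < lam / (2*b) := div_pos hlam (by linarith); linarith
    set t : ℝ := min (b / 2) (‖w‖ / (2 * (C + 1))) with ht
    have ht0 : 0 < t := lt_min (by linarith) (div_pos hwpos (by linarith))
    set c : ℂ := ((t / ‖w‖ : ℝ) : ℂ) * w with hc
    have hnc : ‖c‖ = t := by
      rw [hc, norm_mul, Complex.norm_real, Real.norm_eq_abs, abs_of_pos (div_pos ht0 hwpos)]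
      have habs : ‖w‖ ≠ 0 := hwpos.ne'
      field_simp
    have hkey := key c
    have haux := norm_add_le_aux (xh i) c hi
    rw [← hb] at haux
    -- lam * (‖xh i + c‖ - b) ≤ (c * conj s).re + lam * ‖c‖^2/(2*b)
    have hcs : (c * (starRingEnd ℂ) s).re = lam / b * (c * (starRingEnd ℂ) (xh i)).re := by
      rw [hs, _root_.map_mul, Complex.conj_ofReal]
      rw [show c * (((lam / b : ℝ) : ℂ) * (starRingEnd ℂ) (xh i))
        = ((lam / b : ℝ) : ℂ) * (c * (starRingEnd ℂ) (xh i)) by ring]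
      rw [Complex.re_ofReal_mul]
    have hlam2 : lam * (‖xh i + c‖ - b)
        ≤ (c * (starRingEnd ℂ) s).re + lam * (‖c‖^2 / (2*b)) := by
      rw [hcs]
      have h1 : ‖xh i + c‖ - b ≤ (c * (starRingEnd ℂ) (xh i)).re / b + ‖c‖^2/(2*b) := by
        linarith
      have := mul_le_mul_of_nonneg_left h1 hlam.le
      rw [mul_add] at this
      calc lam * (‖xh i + c‖ - b) ≤ lam * ((c * (starRingEnd ℂ) (xh i)).re / b) + lam * (‖c‖^2/(2*b)) := this
      _ = lam / b * (c * (starRingEnd ℂ) (xh i)).re + lam * (‖c‖^2/(2*b)) := by ring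
    have hcw : (c * (starRingEnd ℂ) w).re = t * ‖w‖ := by
      rw [hc, mul_assoc, Complex.re_ofReal_mul, Complex.mul_conj]
      rw [Complex.ofReal_re, Complex.normSq_eq_norm_sq]
      have habs : ‖w‖ ≠ 0 := hwpos.ne'
      field_simp
    have hsplit : (c * (starRingEnd ℂ) r).re
        = (c * (starRingEnd ℂ) w).re + (c * (starRingEnd ℂ) s).re := by
      rw [hw, map_sub, mul_sub, Complex.sub_re]; ring
    -- combine: 0 ≤ -t‖w‖ + t^2 * C
    have hfinal : 0 ≤ -(t * ‖w‖) + t^2 * C := by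
      rw [hsplit, hnc, ← hb] at hkey
      rw [hnc] at hlam2
      have h2 : 0 ≤ -(c * (starRingEnd ℂ) w).re + t^2 * K/2 + lam * (t^2/(2*b)) := by
        linarith
      rw [hcw] at h2
      rw [hC]
      have hexp : t^2*(K/2 + lam/(2*b)) = t^2*K/2 + lam*(t^2/(2*b)) := by ring
      linarith
    -- contradiction
    have hwle : ‖w‖ ≤ t * C := by
      have := hfinal
      nlinarith
    obtain ⟨u, hupos, hu, ht2⟩ : ∃ u : ℝ, 0 < u ∧ u * (2 * (C + 1)) = ‖w‖ ∧ t ≤ u :=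
      ⟨‖w‖ / (2 * (C + 1)), div_pos hwpos (by linarith),
        div_mul_cancel₀ _ (by linarith : (2 * (C + 1)) ≠ 0), min_le_right _ _⟩
    nlinarith [mul_le_mul_of_nonneg_right ht2 hC0.le, mul_pos hupos hC0]
  -- now r = s
  have hrs : r = s := sub_eq_zero.mp hw0
  show ‖debiasedLasso y A Lam xh i‖ = b + lam / Lam
  have hdb : debiasedLasso y A Lam xh i = (((1 + lam / (Lam * b)) : ℝ) : ℂ) * xh i := by
    unfold debiasedLasso
    simp only [Pi.add_apply, Pi.smul_apply]
    rw [← hr, hrs, hs, Complex.real_smul]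
    push_cast
    have hb' : (b:ℂ) ≠ 0 := by exact_mod_cast hb0.ne'
    have hL' : (Lam:ℂ) ≠ 0 := by exact_mod_cast hLam.ne'
    field_simp
  rw [hdb, norm_mul, Complex.norm_real, Real.norm_eq_abs, ← hb]
  have hpos : (0:ℝ) < 1 + lam / (Lam * b) := by have : 0 < lam / (Lam*b) := div_pos hlam (by nlinarith); linarith
  rw [abs_of_pos hpos]
  field_simp
end

section
/- Let c ≥ 0, σ₁ > 0, σ₂ > 0 with σ₁ ≠ σ₂, and μ₂ ∈ ℝ. Suppose for each N ∈ ℕ we have vectors w₁(N), w₂(N) ∈ ℝ^N such that |w₂,ᵢ(N) − w₁,ᵢ(N)| ≤ c for every i ≤ N and every N. If the empirical distribution of the entries of w₁(N) converges weakly (as N → ∞) to the Gaussian distribution N(0, σ₁²), then the empirical distribution of the entries of w₂(N) cannot converge weakly to the Gaussian distribution N(μ₂, σ₂²). -/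
open Filter MeasureTheory ProbabilityTheory BoundedContinuousFunction Real Set

noncomputable def stepFun (t : ℝ) : ℝ →ᵇ ℝ :=
  BoundedContinuousFunction.ofNormedAddCommGroup (fun x => max 0 (min (x - t) 1))
    (continuous_const.max ((continuous_id.sub continuous_const).min continuous_const)) 1
    (fun x => by
      rw [Real.norm_eq_abs, abs_le]
      constructor
      · linarith [le_max_left (0:ℝ) (min (x - t) 1)]
      · exact max_le one_pos.le (min_le_right _ _))

lemma stepFun_apply (t x : ℝ) : stepFun t x = max 0 (min (x - t) 1) := rfl

lemma stepFun_nonneg (t x : ℝ) : 0 ≤ stepFun t x := le_max_left _ _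

lemma stepFun_le_one (t x : ℝ) : stepFun t x ≤ 1 := max_le one_pos.le (min_le_right _ _)

lemma stepFun_mono (t : ℝ) : Monotone (stepFun t) := fun x y hxy => by
  simp only [stepFun_apply]
  exact max_le_max le_rfl (min_le_min (by linarith) le_rfl)

lemma stepFun_shift (t c x : ℝ) : stepFun t (x + c) = stepFun (t - c) x := by
  simp only [stepFun_apply]; ring_nf

lemma stepFun_eq_zero (t x : ℝ) (h : x ≤ t) : stepFun t x = 0 := by
  simp only [stepFun_apply]
  rw [max_eq_left]
  exact le_trans (min_le_left _ _) (by linarith)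

lemma stepFun_eq_one (t x : ℝ) (h : t + 1 ≤ x) : stepFun t x = 1 := by
  simp only [stepFun_apply]
  rw [min_eq_right (by linarith), max_eq_right one_pos.le]

lemma integrable_step_pdf (t m : ℝ) (v : NNReal) :
    Integrable (fun x => stepFun t x * gaussianPDFReal m v x) := by
  refine (integrable_gaussianPDFReal m v).bdd_mul ((stepFun t).continuous.aestronglyMeasurable)
    (c := 1) (ae_of_all _ fun x => ?_)
  rw [Real.norm_eq_abs, abs_le]
  exact ⟨by linarith [stepFun_nonneg t x], stepFun_le_one t x⟩

lemma integral_gaussianReal_eq (f : ℝ →ᵇ ℝ) (m : ℝ) (v : NNReal) (hv : v ≠ 0) :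
    ∫ x, f x ∂(gaussianReal m v) = ∫ x, f x * gaussianPDFReal m v x := by
  rw [gaussianReal_of_var_ne_zero m hv]
  have h : gaussianPDF m v = fun x => ((gaussianPDFReal m v x).toNNReal : ENNReal) := by
    funext x; rfl
  rw [h, integral_withDensity_eq_integral_smul
    ((measurable_gaussianPDFReal m v).real_toNNReal) f]
  congr 1
  funext x
  rw [NNReal.smul_def, smul_eq_mul, Real.coe_toNNReal _ (gaussianPDFReal_nonneg m v x), mul_comm]

lemma step_integral_ub (m : ℝ) (v : NNReal) (hv : 0 < (v:ℝ)) (s : ℝ) (hs : m + 2*v ≤ s) :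
    ∫ x, stepFun s x * gaussianPDFReal m v x ≤
      (Real.sqrt (2*π*v))⁻¹ * Real.exp (-(s-m)^2/(2*v)) := by
  set K : ℝ := (Real.sqrt (2*π*v))⁻¹ with hK
  have hKpos : 0 < K := by rw [hK]; positivity
  set k : ℝ := (s-m)/(2*v) with hkdef
  have hk : 0 < k := div_pos (by linarith) (by positivity)
  have hk1 : 1 ≤ k := by
    rw [hkdef, le_div_iff₀ (by positivity : (0:ℝ) < 2*v)]; linarith
  have h0 : ∫ x, stepFun s x * gaussianPDFReal m v x
      = ∫ x in Ioi s, stepFun s x * gaussianPDFReal m v x := by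
    rw [setIntegral_eq_integral_of_forall_compl_eq_zero]
    intro x hx
    rw [stepFun_eq_zero s x (by simpa using hx), zero_mul]
  have hIntExp : IntegrableOn (fun x => (K * Real.exp (k*m)) * Real.exp (-(k*x))) (Ioi s) := by
    have := (exp_neg_integrableOn_Ioi s hk).const_mul (K * Real.exp (k*m))
    simpa [neg_mul, IntegrableOn] using this
  have hmono : ∫ x in Ioi s, stepFun s x * gaussianPDFReal m v x
      ≤ ∫ x in Ioi s, (K * Real.exp (k*m)) * Real.exp (-(k*x)) := by
    refine setIntegral_mono_on ((integrable_step_pdf s m v).integrableOn) hIntExp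
      measurableSet_Ioi (fun x hx => ?_)
    have hxs : s ≤ x := le_of_lt hx
    have hpdf : gaussianPDFReal m v x ≤ K * Real.exp (-(k*(x-m))) := by
      rw [gaussianPDFReal]
      refine mul_le_mul_of_nonneg_left ?_ hKpos.le
      refine Real.exp_le_exp.mpr ?_
      have h2v : (0:ℝ) < 2*v := by positivity
      have hexp : (s-m)*(x-m) ≤ (x-m)^2 := by nlinarith
      have key : (s-m)/(2*↑v)*(x-m)*(2*↑v) = (s-m)*(x-m) := by field_simp
      rw [hkdef, div_le_iff₀ h2v]
      linarith
    calc stepFun s x * gaussianPDFReal m v x ≤ 1 * gaussianPDFReal m v x :=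
          mul_le_mul_of_nonneg_right (stepFun_le_one s x) (gaussianPDFReal_nonneg m v x)
      _ = gaussianPDFReal m v x := one_mul _
      _ ≤ K * Real.exp (-(k*(x-m))) := hpdf
      _ = (K * Real.exp (k*m)) * Real.exp (-(k*x)) := by
          rw [mul_assoc, ← Real.exp_add]; ring_nf
  have hcomp : ∫ x in Ioi s, (K * Real.exp (k*m)) * Real.exp (-(k*x))
      = (K * Real.exp (k*m)) * (k⁻¹ * Real.exp (-(k*s))) := by
    rw [MeasureTheory.integral_const_mul]
    congr 1
    have h := integral_comp_mul_left_Ioi (fun y => Real.exp (-y)) s hk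
    simp only [smul_eq_mul] at h
    rw [h, integral_exp_neg_Ioi]
  have hfinal : (K * Real.exp (k*m)) * (k⁻¹ * Real.exp (-(k*s)))
      ≤ K * Real.exp (-(s-m)^2/(2*v)) := by
    have h1 : Real.exp (k*m) * Real.exp (-(k*s)) = Real.exp (-(s-m)^2/(2*v)) := by
      rw [← Real.exp_add]
      congr 1
      rw [hkdef]; field_simp; ring
    calc (K * Real.exp (k*m)) * (k⁻¹ * Real.exp (-(k*s)))
        = K * k⁻¹ * (Real.exp (k*m) * Real.exp (-(k*s))) := by ring
      _ = K * k⁻¹ * Real.exp (-(s-m)^2/(2*v)) := by rw [h1]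
      _ ≤ K * 1 * Real.exp (-(s-m)^2/(2*v)) := by
          refine mul_le_mul_of_nonneg_right (mul_le_mul_of_nonneg_left ?_ hKpos.le)
            (Real.exp_pos _).le
          exact inv_le_one_of_one_le₀ hk1
      _ = K * Real.exp (-(s-m)^2/(2*v)) := by rw [mul_one]
  rw [h0]
  exact hmono.trans (hcomp.le.trans hfinal)

lemma step_integral_lb (m : ℝ) (v : NNReal) (hv : 0 < (v:ℝ)) (t : ℝ) (ht : m ≤ t + 1) :
    gaussianPDFReal m v (t+2) ≤ ∫ x, stepFun t x * gaussianPDFReal m v x := by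
  have hIcc : ∫ x in Icc (t+1) (t+2), stepFun t x * gaussianPDFReal m v x
      ≤ ∫ x, stepFun t x * gaussianPDFReal m v x := by
    refine setIntegral_le_integral (integrable_step_pdf t m v) (ae_of_all _ (fun x => ?_))
    exact mul_nonneg (stepFun_nonneg t x) (gaussianPDFReal_nonneg m v x)
  have hvol : (volume (Icc (t+1) (t+2))).toReal = 1 := by
    rw [Real.volume_Icc]; norm_num
  have hconst : gaussianPDFReal m v (t+2) * (volume (Icc (t+1) (t+2))).toReal
      ≤ ∫ x in Icc (t+1) (t+2), stepFun t x * gaussianPDFReal m v x := by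
    refine setIntegral_ge_of_const_le_real measurableSet_Icc (by simp) (fun x hx => ?_)
      ((integrable_step_pdf t m v).integrableOn)
    obtain ⟨hx1, hx2⟩ := hx
    rw [stepFun_eq_one t x hx1, one_mul]
    rw [gaussianPDFReal, gaussianPDFReal]
    refine mul_le_mul_of_nonneg_left (Real.exp_le_exp.mpr ?_) (by positivity)
    have h2v : (0:ℝ) < 2*v := by positivity
    rw [div_le_div_iff_of_pos_right h2v]
    nlinarith
  rw [hvol, mul_one] at hconst
  exact hconst.trans hIcc

lemma quad_tendsto {a b e : ℝ} (ha : 0 < a) :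
    Tendsto (fun t : ℝ => a*t^2 + b*t + e) atTop atTop := by
  have h1 : Tendsto (fun t : ℝ => a*t + b) atTop atTop :=
    tendsto_atTop_add_const_right _ b (tendsto_id.const_mul_atTop ha)
  have h2 : Tendsto (fun t : ℝ => t*(a*t + b)) atTop atTop :=
    tendsto_id.atTop_mul_atTop₀ h1
  have h3 := tendsto_atTop_add_const_right _ e h2
  exact h3.congr (fun t => by ring)

lemma key_s5 (μa μb c : ℝ) (va vb : NNReal) (hva : 0 < (va:ℝ)) (hvb : 0 < (vb:ℝ))
    (hlt : (vb:ℝ) < (va:ℝ))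
    (h : ∀ t : ℝ, ∫ x, stepFun t x ∂(gaussianReal μa va)
        ≤ ∫ x, stepFun (t - c) x ∂(gaussianReal μb vb)) : False := by
  have hva0 : va ≠ 0 := fun h0 => by simp [h0] at hva
  have hvb0 : vb ≠ 0 := fun h0 => by simp [h0] at hvb
  set Ka : ℝ := (Real.sqrt (2*π*va))⁻¹ with hKa
  set Kb : ℝ := (Real.sqrt (2*π*vb))⁻¹ with hKb
  have hKapos : 0 < Ka := by rw [hKa]; positivity
  have hKbpos : 0 < Kb := by rw [hKb]; positivity
  set a : ℝ := 1/(2*vb) - 1/(2*va) with hadef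
  have hapos : 0 < a := by
    rw [hadef, sub_pos]
    apply one_div_lt_one_div_of_lt (by positivity)
    linarith
  set b : ℝ := (-c - μb)/vb - (2 - μa)/va with hbdef
  set e : ℝ := (-c-μb)^2/(2*vb) - (2-μa)^2/(2*va) with hedef
  have hD : ∀ t : ℝ, (t-c-μb)^2/(2*(vb:ℝ)) - (t+2-μa)^2/(2*(va:ℝ)) = a*t^2 + b*t + e := by
    intro t
    rw [hadef, hbdef, hedef]
    field_simp
    ring
  have htend : Tendsto (fun t : ℝ => (t-c-μb)^2/(2*(vb:ℝ)) - (t+2-μa)^2/(2*(va:ℝ)))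
      atTop atTop := by
    refine (quad_tendsto hapos).congr (fun t => (hD t).symm)
  obtain ⟨t, ht1, ht2, ht3⟩ :=
    ((eventually_ge_atTop (μa - 1)).and ((eventually_ge_atTop (μb + 2*(vb:ℝ) + c)).and
      (htend.eventually_gt_atTop (Real.log (Kb/Ka))))).exists
  -- lower bound on the `a` side
  have hLB : Ka * Real.exp (-(t+2-μa)^2/(2*(va:ℝ)))
      ≤ ∫ x, stepFun t x ∂(gaussianReal μa va) := by
    rw [integral_gaussianReal_eq _ _ _ hva0]
    have := step_integral_lb μa va hva t (by linarith)
    rw [gaussianPDFReal] at this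
    convert this using 4 <;> ring
  -- upper bound on the `b` side
  have hUB : ∫ x, stepFun (t - c) x ∂(gaussianReal μb vb)
      ≤ Kb * Real.exp (-(t-c-μb)^2/(2*(vb:ℝ))) := by
    rw [integral_gaussianReal_eq _ _ _ hvb0]
    have := step_integral_ub μb vb hvb (t - c) (by linarith)
    convert this using 4 <;> ring
  have hchain : Ka * Real.exp (-(t+2-μa)^2/(2*(va:ℝ)))
      ≤ Kb * Real.exp (-(t-c-μb)^2/(2*(vb:ℝ))) := (hLB.trans (h t)).trans hUB
  -- contradiction from ht3
  set A : ℝ := (t+2-μa)^2/(2*(va:ℝ))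
  set B : ℝ := (t-c-μb)^2/(2*(vb:ℝ))
  have hBA : Real.log (Kb/Ka) < B - A := ht3
  have hexp : Kb/Ka < Real.exp (B - A) := by
    rw [← Real.exp_log (div_pos hKbpos hKapos)]
    exact Real.exp_lt_exp.mpr hBA
  have h2 : Real.exp (B-A) * Real.exp (-B) = Real.exp (-A) := by
    rw [← Real.exp_add]; ring_nf
  have hKb' : Kb < Real.exp (B-A) * Ka := by
    rw [div_lt_iff₀ hKapos] at hexp
    linarith
  have hlast : Kb * Real.exp (-B) < Ka * Real.exp (-A) := by
    calc Kb * Real.exp (-B) < (Real.exp (B-A) * Ka) * Real.exp (-B) :=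
          mul_lt_mul_of_pos_right hKb' (Real.exp_pos _)
      _ = Ka * (Real.exp (B-A) * Real.exp (-B)) := by ring
      _ = Ka * Real.exp (-A) := by rw [h2]
  have : Ka * Real.exp (-A) ≤ Kb * Real.exp (-B) := by
    convert hchain using 3 <;> ring
  linarith

/-- if the entries of `w₂(N)` are uniformly within `c` of those of `w₁(N)`, and
the empirical distribution of `w₁(N)` converges weakly to `N(0, σ₁²)`, then the empirical
distribution of `w₂(N)` cannot converge weakly to `N(μ₂, σ₂²)` when `σ₂ ≠ σ₁`.  Weak
convergence of the empirical measures is expressed through convergence of the empirical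
averages of every bounded continuous test function to its Gaussian integral. -/
theorem empirical_not_gaussian_of_shifted (c : ℝ) (hc : 0 ≤ c) (σ₁ σ₂ : ℝ)
    (hσ₁ : 0 < σ₁) (hσ₂ : 0 < σ₂) (hne : σ₁ ≠ σ₂) (μ₂ : ℝ)
    (w₁ w₂ : (N : ℕ) → Fin N → ℝ)
    (hbd : ∀ N, ∀ i : Fin N, |w₂ N i - w₁ N i| ≤ c)
    (hconv : ∀ f : ℝ →ᵇ ℝ,
      Tendsto (fun N : ℕ => (N : ℝ)⁻¹ * ∑ i : Fin N, f (w₁ N i)) atTop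
        (nhds (∫ x, f x ∂(gaussianReal 0 ⟨σ₁ ^ 2, sq_nonneg σ₁⟩)))) :
    ¬ ∀ f : ℝ →ᵇ ℝ,
      Tendsto (fun N : ℕ => (N : ℝ)⁻¹ * ∑ i : Fin N, f (w₂ N i)) atTop
        (nhds (∫ x, f x ∂(gaussianReal μ₂ ⟨σ₂ ^ 2, sq_nonneg σ₂⟩))) := by
  intro hconv₂
  set v₁ : NNReal := ⟨σ₁ ^ 2, sq_nonneg σ₁⟩ with hv₁
  set v₂ : NNReal := ⟨σ₂ ^ 2, sq_nonneg σ₂⟩ with hv₂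
  have hv₁pos : 0 < (v₁:ℝ) := by
    have h : (v₁:ℝ) = σ₁^2 := rfl
    rw [h]; positivity
  have hv₂pos : 0 < (v₂:ℝ) := by
    have h : (v₂:ℝ) = σ₂^2 := rfl
    rw [h]; positivity
  rcases lt_or_gt_of_ne hne with h12 | h21
  · -- σ₁ < σ₂ : big side is w₂
    refine key_s5 μ₂ 0 c v₂ v₁ hv₂pos hv₁pos ?_ (fun t => ?_)
    · show (σ₁^2 : ℝ) < σ₂^2
      nlinarith
    · refine le_of_tendsto_of_tendsto' (hconv₂ (stepFun t)) (hconv (stepFun (t - c)))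
        (fun N => ?_)
      refine mul_le_mul_of_nonneg_left (Finset.sum_le_sum fun i _ => ?_)
        (inv_nonneg.mpr (Nat.cast_nonneg N))
      calc stepFun t (w₂ N i) ≤ stepFun t (w₁ N i + c) :=
            stepFun_mono t (by have := (abs_le.mp (hbd N i)).2; linarith)
        _ = stepFun (t - c) (w₁ N i) := stepFun_shift t c _
  · -- σ₂ < σ₁ : big side is w₁
    refine key_s5 0 μ₂ c v₁ v₂ hv₁pos hv₂pos ?_ (fun t => ?_)
    · show (σ₂^2 : ℝ) < σ₁^2
      nlinarith
    · refine le_of_tendsto_of_tendsto' (hconv (stepFun t)) (hconv₂ (stepFun (t - c)))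
        (fun N => ?_)
      refine mul_le_mul_of_nonneg_left (Finset.sum_le_sum fun i _ => ?_)
        (inv_nonneg.mpr (Nat.cast_nonneg N))
      calc stepFun t (w₁ N i) ≤ stepFun t (w₂ N i + c) :=
            stepFun_mono t (by have := (abs_le.mp (hbd N i)).1; linarith)
        _ = stepFun (t - c) (w₂ N i) := stepFun_shift t c _
end

section
/- Let y ∈ ℂ^M, A ∈ ℂ^{M×N}, λ > 0, Λ > 0 and κ ≥ 0. Let x̂ be a global minimizer of the complex LASSO objective and let x̂^d = x̂ + (1/Λ) A^H (y − A x̂) be the debiased LASSO estimator. Then for every index i, |x̂^d_i| > κ + λ/Λ if and only if |x̂_i| > κ. -/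
open Matrix Finset
open Complex

lemma lasso_key {M N : ℕ} (y : Fin M → ℂ) (A : Matrix (Fin M) (Fin N) ℂ)
    (lam : ℝ) (xh : Fin N → ℂ)
    (hmin : ∀ x : Fin N → ℂ, lassoObj y A lam xh ≤ lassoObj y A lam x)
    (i : Fin N) (z : ℂ) :
    0 ≤ (1/2) * ((∑ j, normSq (A j i)) * normSq z)
        - ((starRingEnd ℂ) z * ∑ j, (starRingEnd ℂ) (A j i) * (y j - A.mulVec xh j)).re
        + lam * (‖xh i + z‖ - ‖xh i‖) := by
  have h := hmin (Function.update xh i (xh i + z))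
  have hmv : ∀ j, A.mulVec (Function.update xh i (xh i + z)) j = A.mulVec xh j + A j i * z := by
    intro j
    simp only [mulVec, dotProduct]
    have h : ∀ k, A j k * (Function.update xh i (xh i + z) k)
        = A j k * xh k + (if k = i then A j k * z else 0) := by
      intro k
      rcases eq_or_ne k i with rfl | hk
      · simp [Function.update_apply]; ring
      · simp [Function.update_apply, hk]
    simp only [h, Finset.sum_add_distrib, Finset.sum_ite_eq' Finset.univ i]
    simp
  have hn : ∀ k, ‖Function.update xh i (xh i + z) k‖
      = ‖xh k‖ + (if k = i then ‖xh i + z‖ - ‖xh i‖ else 0) := by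
    intro k
    rcases eq_or_ne k i with rfl | hk
    · simp [Function.update_apply]
    · simp [Function.update_apply, hk]
  have hsq : ∀ j, ‖y j - A.mulVec (Function.update xh i (xh i + z)) j‖ ^ 2
      = ‖y j - A.mulVec xh j‖ ^ 2 + normSq (A j i) * normSq z
        - 2 * ((starRingEnd ℂ) z * ((starRingEnd ℂ) (A j i) * (y j - A.mulVec xh j))).re := by
    intro j
    rw [hmv j]
    have : y j - (A.mulVec xh j + A j i * z) = (y j - A.mulVec xh j) - A j i * z := by ring
    rw [this, Complex.sq_norm, Complex.normSq_sub,
      Complex.sq_norm, Complex.normSq_mul]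
    have : ((y j - A.mulVec xh j) * (starRingEnd ℂ) (A j i * z)).re
        = ((starRingEnd ℂ) z * ((starRingEnd ℂ) (A j i) * (y j - A.mulVec xh j))).re := by
      rw [_root_.map_mul]; ring_nf
    rw [this]
  unfold lassoObj at h
  rw [Finset.sum_congr rfl (fun j _ => hsq j), Finset.sum_congr rfl (fun k _ => hn k)] at h
  simp only [Finset.sum_add_distrib, Finset.sum_sub_distrib, Finset.sum_ite_eq' Finset.univ i,
    Finset.mem_univ, if_true, ← Finset.sum_mul, ← Finset.mul_sum, Complex.re_sum] at h
  rw [← Complex.re_sum, ← Finset.mul_sum] at h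
  nlinarith [h]

/-- Zero case: the correlation is at most `lam` in absolute value. -/
lemma lasso_kkt_zero {M N : ℕ} (y : Fin M → ℂ) (A : Matrix (Fin M) (Fin N) ℂ)
    (lam : ℝ) (hlam : 0 ≤ lam) (xh : Fin N → ℂ)
    (hmin : ∀ x : Fin N → ℂ, lassoObj y A lam xh ≤ lassoObj y A lam x)
    (i : Fin N) (h0 : xh i = 0) :
    ‖∑ j, (starRingEnd ℂ) (A j i) * (y j - A.mulVec xh j)‖ ≤ lam := by
  set c := ∑ j, (starRingEnd ℂ) (A j i) * (y j - A.mulVec xh j) with hc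
  set S := ∑ j, normSq (A j i) with hS
  have hSnn : 0 ≤ S := Finset.sum_nonneg fun j _ => normSq_nonneg _
  rcases eq_or_ne c 0 with h | h
  · simp [h]; positivity
  have hcpos : 0 < ‖c‖ := norm_pos_iff.mpr h
  have key : ∀ t : ℝ, 0 < t → normSq c ≤ lam * ‖c‖ + t * ((1/2) * S * normSq c) := by
    intro t ht
    have := lasso_key y A lam xh hmin i ((t : ℂ) * c)
    rw [h0] at this
    have h1 : ((starRingEnd ℂ) ((t:ℂ) * c) * c).re = t * normSq c := by
      rw [_root_.map_mul, Complex.conj_ofReal, mul_assoc, Complex.re_ofReal_mul,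
        mul_comm ((starRingEnd ℂ) c) c, Complex.mul_conj, Complex.ofReal_re]
    have h2 : normSq ((t:ℂ) * c) = t^2 * normSq c := by
      rw [Complex.normSq_mul, Complex.normSq_ofReal]; ring
    have h3 : ‖(0:ℂ) + (t:ℂ) * c‖ = t * ‖c‖ := by
      rw [zero_add, norm_mul, Complex.norm_real, Real.norm_eq_abs, abs_of_pos ht]
    rw [h1, h2, h3] at this
    simp only [norm_zero, sub_zero] at this
    have h4 : 0 ≤ t * ((1/2) * (S * (t * normSq c)) - normSq c + lam * ‖c‖) := by
      rw [← hS] at this; nlinarith [this]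
    have h5 := nonneg_of_mul_nonneg_right h4 ht
    nlinarith [h5]
  have hle : normSq c ≤ lam * ‖c‖ := by
    refine le_of_forall_pos_le_add fun ε hε => ?_
    have hden : 0 < (1/2) * S * normSq c + 1 := by nlinarith [mul_nonneg hSnn (normSq_nonneg c)]
    have ht : 0 < ε / ((1/2) * S * normSq c + 1) := div_pos hε hden
    have := key _ ht
    have hfrac : (ε / ((1/2) * S * normSq c + 1)) * ((1/2) * S * normSq c) ≤ ε := by
      rw [div_mul_eq_mul_div, div_le_iff₀ hden]
      nlinarith [normSq_nonneg c]
    linarith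
  have hnsq : normSq c = ‖c‖ * ‖c‖ := by
    rw [Complex.normSq_eq_norm_sq]; ring
  rw [hnsq] at hle
  exact le_of_mul_le_mul_right (by linarith) hcpos

/-- Nonzero case: the correlation equals `lam * xh i / ‖xh i‖`. -/
lemma lasso_kkt_nonzero {M N : ℕ} (y : Fin M → ℂ) (A : Matrix (Fin M) (Fin N) ℂ)
    (lam : ℝ) (hlam : 0 ≤ lam) (xh : Fin N → ℂ)
    (hmin : ∀ x : Fin N → ℂ, lassoObj y A lam xh ≤ lassoObj y A lam x)
    (i : Fin N) (h0 : xh i ≠ 0) :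
    (∑ j, (starRingEnd ℂ) (A j i) * (y j - A.mulVec xh j))
      = ((lam / ‖xh i‖ : ℝ) : ℂ) * xh i := by
  obtain ⟨c, hc⟩ : ∃ c, c = ∑ j, (starRingEnd ℂ) (A j i) * (y j - A.mulVec xh j) := ⟨_, rfl⟩
  obtain ⟨S, hS⟩ : ∃ S, S = ∑ j, normSq (A j i) := ⟨_, rfl⟩
  have hSnn : 0 ≤ S := hS ▸ Finset.sum_nonneg fun j _ => normSq_nonneg _
  obtain ⟨s, hsdef⟩ : ∃ s, s = ‖xh i‖ := ⟨_, rfl⟩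
  have hs : 0 < s := hsdef ▸ norm_pos_iff.mpr h0
  obtain ⟨w, hw⟩ : ∃ w : ℂ, w = ((lam / s : ℝ) : ℂ) * xh i - c := ⟨_, rfl⟩
  rw [← hc, ← hsdef]
  suffices hwz : w = 0 by
    rw [hwz] at hw
    exact (sub_eq_zero.mp hw.symm).symm
  obtain ⟨q, hq⟩ : ∃ q, q = normSq w := ⟨_, rfl⟩
  have hq0 : 0 ≤ q := hq ▸ normSq_nonneg w
  obtain ⟨R, hR⟩ : ∃ R, R = (xh i * (starRingEnd ℂ) w).re := ⟨_, rfl⟩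
  -- bound on the norm of a perturbation
  have bound : ∀ t : ℝ, ‖xh i + (t:ℂ) * w‖ ≤ s + (t^2 * q + 2 * t * R) / (2 * s) := by
    intro t
    obtain ⟨u, hu⟩ : ∃ u, u = ‖xh i + (t:ℂ) * w‖ := ⟨_, rfl⟩
    rw [← hu]
    have hu0 : 0 ≤ u := hu ▸ norm_nonneg _
    have hu2 : u^2 = s^2 + (t^2 * q + 2 * t * R) := by
      rw [hu, hsdef, hq, hR, Complex.sq_norm, Complex.normSq_add,
        Complex.normSq_mul, Complex.normSq_ofReal, Complex.sq_norm]
      rw [_root_.map_mul, Complex.conj_ofReal]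
      have : (xh i * ((t:ℂ) * (starRingEnd ℂ) w)).re = t * (xh i * (starRingEnd ℂ) w).re := by
        rw [show xh i * ((t:ℂ) * (starRingEnd ℂ) w) = (t:ℂ) * (xh i * (starRingEnd ℂ) w) by ring,
          Complex.re_ofReal_mul]
      rw [this]; ring
    obtain ⟨d, hd⟩ : ∃ d, d = t^2 * q + 2 * t * R := ⟨_, rfl⟩
    rw [← hd] at hu2 ⊢
    obtain ⟨v, hv⟩ : ∃ v, v = s + d / (2 * s) := ⟨_, rfl⟩
    rw [← hv]
    have h2sv : 2 * s * v = s^2 + u^2 := by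
      rw [hv, hu2]; field_simp; ring
    have hvnn : 0 ≤ v := by nlinarith [sq_nonneg s, sq_nonneg u, hs]
    have hv2 : u^2 ≤ v^2 := by nlinarith [h2sv, sq_nonneg (s^2 - u^2), mul_pos hs hs]
    nlinarith [hv2, hvnn, hu0]
  -- the relation defining w
  have hrel : ((starRingEnd ℂ) w * c).re = (lam/s) * R - q := by
    have hqre : q = ((starRingEnd ℂ) w * w).re := by
      rw [hq, mul_comm, Complex.mul_conj, Complex.ofReal_re]
    have hfirst : ((starRingEnd ℂ) w * (((lam / s : ℝ) : ℂ) * xh i)).re = (lam/s) * R := by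
      rw [show (starRingEnd ℂ) w * (((lam / s : ℝ) : ℂ) * xh i)
          = ((lam / s : ℝ) : ℂ) * (xh i * (starRingEnd ℂ) w) by ring,
        Complex.re_ofReal_mul, hR]
    have hsplit : ((starRingEnd ℂ) w * w)
        = (starRingEnd ℂ) w * (((lam / s : ℝ) : ℂ) * xh i) - (starRingEnd ℂ) w * c := by
      rw [hw]; ring
    rw [hsplit, Complex.sub_re, hfirst] at hqre
    linarith
  -- the directional inequality
  obtain ⟨B, hB⟩ : ∃ B, B = (1/2) * S * q + lam * q / (2*s) := ⟨_, rfl⟩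
  have hBnn : 0 ≤ B := by
    have h1 : 0 ≤ (1/2) * S * q := by
      have := mul_nonneg hSnn hq0; nlinarith
    have h2 : 0 ≤ lam * q / (2*s) := div_nonneg (mul_nonneg hlam hq0) (by linarith)
    rw [hB]; linarith
  have key : ∀ t : ℝ, 0 ≤ t^2 * B + t * q := by
    intro t
    have hk := lasso_key y A lam xh hmin i ((t:ℂ) * w)
    rw [← hc, ← hS, ← hsdef] at hk
    have h1 : ((starRingEnd ℂ) ((t:ℂ) * w) * c).re = t * ((starRingEnd ℂ) w * c).re := by
      rw [_root_.map_mul, Complex.conj_ofReal, mul_assoc, Complex.re_ofReal_mul]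
    have h2 : normSq ((t:ℂ) * w) = t^2 * q := by
      rw [Complex.normSq_mul, Complex.normSq_ofReal, ← hq]; ring
    rw [h1, h2, hrel] at hk
    have hmul : lam * (‖xh i + (t:ℂ) * w‖ - s) ≤ lam * ((t^2 * q + 2 * t * R) / (2 * s)) :=
      mul_le_mul_of_nonneg_left (by linarith [bound t]) hlam
    have hdiv : lam * ((t^2 * q + 2 * t * R) / (2 * s))
        = t^2 * (lam * q / (2*s)) + t * ((lam/s) * R) := by
      field_simp
    have hcomb : 0 ≤ (1/2) * (S * (t^2 * q)) - t * ((lam/s) * R - q)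
        + (t^2 * (lam * q / (2*s)) + t * ((lam/s) * R)) := by
      linarith [hk, hmul, hdiv]
    rw [hB]; nlinarith [hcomb]
  -- conclude q = 0
  have hqz : q = 0 := by
    have hden : (0:ℝ) < B + 1 := by linarith
    have hthis := key (-(q / (B + 1)))
    have heq : (-(q / (B + 1)))^2 * B + (-(q / (B + 1))) * q = -(q^2) / (B+1)^2 := by
      field_simp; ring
    rw [heq] at hthis
    have hp : (0:ℝ) < (B+1)^2 := by positivity
    have h3 := mul_nonneg hthis hp.le
    rw [div_mul_cancel₀ _ (ne_of_gt hp)] at h3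
    nlinarith [h3, sq_nonneg q]
  rw [hq] at hqz
  exact Complex.normSq_eq_zero.mp hqz

/-- for every index `i`, `|x̂ᵈᵢ| > κ + λ/Λ` iff `|x̂ᵢ| > κ`. -/
theorem debiasedLasso_detector_iff {M N : ℕ} (y : Fin M → ℂ)
    (A : Matrix (Fin M) (Fin N) ℂ) (lam : ℝ) (hlam : 0 < lam)
    (Lam : ℝ) (hLam : 0 < Lam) (κ : ℝ) (hκ : 0 ≤ κ) (xh : Fin N → ℂ)
    (hmin : ∀ x : Fin N → ℂ, lassoObj y A lam xh ≤ lassoObj y A lam x) :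
    ∀ i : Fin N, κ + lam / Lam < ‖debiasedLasso y A Lam xh i‖ ↔ κ < ‖xh i‖ := by
  intro i
  have hcdef : Aᴴ.mulVec (y - A.mulVec xh) i
      = ∑ j, (starRingEnd ℂ) (A j i) * (y j - A.mulVec xh j) := by
    simp [mulVec, dotProduct, conjTranspose_apply, Pi.sub_apply]
  have hd : debiasedLasso y A Lam xh i
      = xh i + (1 / Lam : ℝ) • (∑ j, (starRingEnd ℂ) (A j i) * (y j - A.mulVec xh j)) := by
    rw [← hcdef]; rfl
  rcases eq_or_ne (xh i) 0 with h0 | h0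
  · have hcle := lasso_kkt_zero y A lam hlam.le xh hmin i h0
    have hdle : ‖debiasedLasso y A Lam xh i‖ ≤ lam / Lam := by
      rw [hd, h0, zero_add, norm_smul, Real.norm_eq_abs, abs_of_pos (by positivity : (0:ℝ) < 1/Lam)]
      rw [div_eq_mul_inv lam Lam, mul_comm lam Lam⁻¹, one_div]
      exact mul_le_mul_of_nonneg_left hcle (by positivity)
    constructor
    · intro hlt; exfalso; linarith
    · intro hlt; exfalso; rw [h0, norm_zero] at hlt; linarith
  · have hkkt := lasso_kkt_nonzero y A lam hlam.le xh hmin i h0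
    have hs : 0 < ‖xh i‖ := norm_pos_iff.mpr h0
    have hdnorm : ‖debiasedLasso y A Lam xh i‖ = ‖xh i‖ + lam / Lam := by
      rw [hd, hkkt, Complex.real_smul]
      have hfac : xh i + ((1 / Lam : ℝ) : ℂ) * (((lam / ‖xh i‖ : ℝ) : ℂ) * xh i)
          = (((1 + lam / (Lam * ‖xh i‖) : ℝ)) : ℂ) * xh i := by
        push_cast
        field_simp
      rw [hfac, norm_mul, Complex.norm_real, Real.norm_eq_abs,
        abs_of_pos (by positivity : (0:ℝ) < 1 + lam / (Lam * ‖xh i‖))]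
      have ha : ‖xh i‖ ≠ 0 := by
        exact ne_of_gt hs
      field_simp [ne_of_gt hLam, ha]
    rw [hdnorm]
    constructor <;> intro <;> linarith
end

section
/- Let y ∈ ℂ^M, A ∈ ℂ^{M×N}, λ > 0, Λ > 0 and κ ≥ 0. Let x̂ be a global minimizer of the complex LASSO objective and x̂^d = x̂ + (1/Λ) A^H (y − A x̂). Let S ⊆ {1, …, N} be any index set and S^c its complement. Then #{i ∈ S : |x̂^d_i| > κ + λ/Λ} ≥ #{i ∈ S : |x̂_i| > κ} and #{i ∈ S^c : |x̂^d_i| > κ + λ/Λ} ≤ #{i ∈ S^c : |x̂_i| > κ}. Consequently, at matched false alarm levels the debiased LASSO detector's detection probability is at least that of the LASSO detector. -/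
open Matrix Finset

lemma lasso_opt_ineq {M N : ℕ} (y : Fin M → ℂ) (A : Matrix (Fin M) (Fin N) ℂ)
    (lam : ℝ) (xh : Fin N → ℂ)
    (hmin : ∀ x, lassoObj y A lam xh ≤ lassoObj y A lam x) (i : Fin N) (c : ℂ) :
    lam * (‖xh i‖ - ‖xh i + c‖) + ((starRingEnd ℂ) c * Aᴴ.mulVec (y - A.mulVec xh) i).re
      ≤ (1/2) * (∑ j, ‖A j i‖^2) * ‖c‖^2 := by
  have h := hmin (xh + Pi.single i c)
  unfold lassoObj at h
  -- rewrite mulVec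
  have hA : ∀ j, A.mulVec (xh + Pi.single i c) j = A.mulVec xh j + A j i * c := by
    intro j
    rw [Matrix.mulVec_add, Matrix.mulVec_single]
    rfl
  -- quadratic term expansion
  have hq : ∀ j, ‖y j - A.mulVec (xh + Pi.single i c) j‖ ^ 2
      = ‖y j - A.mulVec xh j‖ ^ 2
        - 2 * (((starRingEnd ℂ) c) * ((starRingEnd ℂ) (A j i) * (y j - A.mulVec xh j))).re
        + ‖A j i‖^2 * ‖c‖^2 := by
    intro j
    rw [hA j, show y j - ((A.mulVec xh) j + A j i * c) = (y j - (A.mulVec xh) j) - A j i * c from by ring]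
    simp only [Complex.sq_norm, Complex.normSq_sub, Complex.normSq_mul,
      _root_.map_mul]
    ring_nf
  have hAHi : Aᴴ.mulVec (y - A.mulVec xh) i
      = ∑ j, (starRingEnd ℂ) (A j i) * (y j - A.mulVec xh j) := by
    simp [Matrix.mulVec, dotProduct, Matrix.conjTranspose_apply]
  have hsum : ∑ j, ‖y j - A.mulVec (xh + Pi.single i c) j‖ ^ 2
      = (∑ j, ‖y j - A.mulVec xh j‖^2)
        - 2 * ((starRingEnd ℂ) c * Aᴴ.mulVec (y - A.mulVec xh) i).re
        + (∑ j, ‖A j i‖^2) * ‖c‖^2 := by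
    rw [Finset.sum_congr rfl (fun j _ => hq j)]
    rw [Finset.sum_add_distrib, Finset.sum_sub_distrib, Finset.sum_mul, hAHi,
      Finset.mul_sum, Complex.re_sum, Finset.mul_sum]
  have hl1 : ∑ k : Fin N, ‖(xh + Pi.single i c : Fin N → ℂ) k‖ = (∑ k : Fin N, ‖xh k‖) + (‖xh i + c‖ - ‖xh i‖) := by
    have hupd : xh + Pi.single i c = Function.update xh i (xh i + c) := by
      funext k
      by_cases hk : k = i
      · subst hk; simp
      · simp [Function.update, hk, Pi.single_eq_of_ne hk]
    rw [hupd,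
      ← Finset.add_sum_erase Finset.univ (fun k => ‖Function.update xh i (xh i + c) k‖)
        (Finset.mem_univ i)]
    have h2 : ∑ k ∈ Finset.univ.erase i, ‖Function.update xh i (xh i + c) k‖
        = ∑ k ∈ Finset.univ.erase i, ‖xh k‖ :=
      Finset.sum_congr rfl fun k hk => by rw [Function.update_of_ne (Finset.ne_of_mem_erase hk)]
    have h3 := Finset.add_sum_erase Finset.univ (fun k => ‖xh k‖) (Finset.mem_univ i)
    simp only [Function.update_self] at *
    linarith
  rw [hsum, hl1] at h
  nlinarith [h]

lemma conj_mul_re_comm (a w : ℂ) : ((starRingEnd ℂ) a * w).re = ((starRingEnd ℂ) w * a).re := by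
  rw [← Complex.conj_re ((starRingEnd ℂ) a * w), _root_.map_mul, Complex.conj_conj, mul_comm]

lemma lasso_grad_norm_le {M N : ℕ} (y : Fin M → ℂ) (A : Matrix (Fin M) (Fin N) ℂ)
    (lam : ℝ) (hlam : 0 < lam) (xh : Fin N → ℂ)
    (hmin : ∀ x, lassoObj y A lam xh ≤ lassoObj y A lam x) (i : Fin N) :
    ‖Aᴴ.mulVec (y - A.mulVec xh) i‖ ≤ lam := by
  set g := Aᴴ.mulVec (y - A.mulVec xh) i with hg
  set C := ∑ j, ‖A j i‖^2 with hC
  have hC0 : 0 ≤ C := Finset.sum_nonneg fun j _ => by positivity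
  by_cases hgz : g = 0
  · rw [hgz, norm_zero]; exact hlam.le
  · refine le_of_forall_pos_le_add fun ε hε => ?_
    set t : ℝ := 2 * ε / (C * ‖g‖ + 1) with ht
    have hgn : 0 < ‖g‖ := norm_pos_iff.mpr hgz
    have hden : 0 < C * ‖g‖ + 1 := by nlinarith [norm_nonneg g]
    have htpos : 0 < t := div_pos (by linarith) hden
    have hstar := lasso_opt_ineq y A lam xh hmin i ((t : ℂ) * g)
    have hre : ((starRingEnd ℂ) ((t : ℂ) * g) * g).re = t * ‖g‖^2 := by
      rw [_root_.map_mul, Complex.conj_ofReal, mul_assoc, mul_comm ((starRingEnd ℂ) g) g,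
        Complex.mul_conj, ← Complex.ofReal_mul, Complex.ofReal_re, Complex.normSq_eq_norm_sq]
    have hnc : ‖(t : ℂ) * g‖ = t * ‖g‖ := by
      rw [norm_mul, Complex.norm_real, Real.norm_eq_abs, abs_of_pos htpos]
    have hnb : ‖xh i‖ - ‖xh i + (t : ℂ) * g‖ ≥ -(t * ‖g‖) := by
      have := norm_add_le (xh i) ((t : ℂ) * g)
      rw [hnc] at this; linarith
    rw [hre, hnc] at hstar
    have hkey : t * ‖g‖^2 ≤ lam * (t * ‖g‖) + (1/2) * C * (t * ‖g‖)^2 := by nlinarith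
    -- divide by t‖g‖
    have ht2 : (1/2) * C * t * ‖g‖ ≤ ε := by
      have h5 : t * (C * ‖g‖) ≤ 2 * ε := by
        rw [ht, div_mul_eq_mul_div, div_le_iff₀ hden]
        nlinarith [norm_nonneg g]
      linarith
    nlinarith [hkey, mul_le_mul_of_nonneg_left ht2 (mul_pos htpos hgn).le, mul_pos htpos hgn]

set_option maxHeartbeats 2000000 in
lemma grad_eq_core (g a : ℂ) (lam C : ℝ) (hlam : 0 < lam) (hC0 : 0 ≤ C) (hx : a ≠ 0)
    (hstar : ∀ c : ℂ, lam * (‖a‖ - ‖a + c‖) + ((starRingEnd ℂ) c * g).re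
      ≤ (1/2) * C * ‖c‖^2) :
    g = ((lam / ‖a‖ : ℝ) : ℂ) * a := by
  set na := ‖a‖ with hna
  have hna0 : 0 < na := norm_pos_iff.mpr hx
  set w : ℂ := g - ((lam / na : ℝ) : ℂ) * a with hw
  set nw := ‖w‖ with hnw
  set R1 := ((starRingEnd ℂ) w * g).re with hR1
  set R2 := ((starRingEnd ℂ) a * w).re with hR2
  clear_value na w nw R1 R2
  -- identity: na * R1 - lam * R2 = na * nw^2
  have hid : na * R1 - lam * R2 = na * nw^2 := by
    have e1 : R2 = ((starRingEnd ℂ) w * a).re := by rw [hR2]; exact conj_mul_re_comm a w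
    have e2 : lam * ((starRingEnd ℂ) w * a).re
        = ((starRingEnd ℂ) w * (((lam : ℝ) : ℂ) * a)).re := by
      rw [show (starRingEnd ℂ) w * (((lam : ℝ) : ℂ) * a)
        = ((lam : ℝ) : ℂ) * ((starRingEnd ℂ) w * a) from by ring, Complex.re_ofReal_mul]
    have e3 : na * R1 - lam * ((starRingEnd ℂ) w * a).re
        = ((starRingEnd ℂ) w * (((na : ℝ) : ℂ) * g - ((lam : ℝ) : ℂ) * a)).re := by
      rw [hR1]
      rw [show (starRingEnd ℂ) w * (((na : ℝ) : ℂ) * g - ((lam : ℝ) : ℂ) * a)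
        = ((na : ℝ) : ℂ) * ((starRingEnd ℂ) w * g)
          - (starRingEnd ℂ) w * (((lam : ℝ) : ℂ) * a) from by ring]
      rw [Complex.sub_re, Complex.re_ofReal_mul, e2]
    have e5 : ((na : ℝ) : ℂ) * g - ((lam : ℝ) : ℂ) * a = ((na : ℝ) : ℂ) * w := by
      rw [hw]
      have : ((lam / na : ℝ) : ℂ) = ((lam : ℝ) : ℂ) / ((na : ℝ) : ℂ) := by push_cast; ring
      rw [this]
      have hnaC : ((na : ℝ) : ℂ) ≠ 0 := by
        simpa using ne_of_gt hna0
      field_simp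
    have e6 : ((starRingEnd ℂ) w * (((na : ℝ) : ℂ) * w)).re = na * nw^2 := by
      rw [show (starRingEnd ℂ) w * (((na : ℝ) : ℂ) * w)
        = ((na : ℝ) : ℂ) * ((starRingEnd ℂ) w * w) from by ring, Complex.re_ofReal_mul,
        mul_comm ((starRingEnd ℂ) w) w, Complex.mul_conj, Complex.ofReal_re]
      rw [hnw, Complex.sq_norm]
    rw [e1, e3, e5, e6]
  -- main estimate for each t > 0
  have hmain : ∀ t : ℝ, 0 < t → 2 * na * nw^2 ≤ t * (na * C * nw^2 + lam * nw^2) := by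
    intro t ht
    have hs := hstar ((t : ℂ) * w)
    have hre : ((starRingEnd ℂ) ((t : ℂ) * w) * g).re = t * R1 := by
      rw [_root_.map_mul, Complex.conj_ofReal, mul_assoc, Complex.re_ofReal_mul, hR1]
    have hnc : ‖(t : ℂ) * w‖ = t * nw := by
      rw [norm_mul, Complex.norm_real, Real.norm_eq_abs, abs_of_pos ht, hnw]
    rw [hre, hnc] at hs
    -- expansion of ‖a + t w‖²
    have hsq : ‖a + (t : ℂ) * w‖^2 = na^2 + 2 * t * R2 + t^2 * nw^2 := by
      have h1 : ‖a + (t : ℂ) * w‖^2 = Complex.normSq (a + (t : ℂ) * w) := by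
        rw [Complex.sq_norm]
      rw [h1, Complex.normSq_add]
      have h2 : (a * (starRingEnd ℂ) ((t : ℂ) * w)).re = t * R2 := by
        rw [_root_.map_mul, Complex.conj_ofReal,
          show a * (((t : ℝ) : ℂ) * (starRingEnd ℂ) w) = ((t : ℝ) : ℂ) * (a * (starRingEnd ℂ) w)
            from by ring, Complex.re_ofReal_mul, hR2]
        congr 1
        rw [← Complex.conj_re (a * (starRingEnd ℂ) w), _root_.map_mul, Complex.conj_conj,
          mul_comm]
      have h3 : Complex.normSq ((t : ℂ) * w) = t^2 * nw^2 := by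
        rw [Complex.normSq_mul, Complex.normSq_eq_norm_sq, Complex.normSq_eq_norm_sq,
          Complex.norm_real, Real.norm_eq_abs,
          _root_.sq_abs, hnw]
      have h4 : Complex.normSq a = na^2 := by
        rw [Complex.normSq_eq_norm_sq, hna]
      rw [h2, h3, h4]; ring
    -- AM-GM: 2 na s ≤ 2 na² + 2 t R2 + t² nw²
    have hub : 2 * na * ‖a + (t : ℂ) * w‖ ≤ 2 * na^2 + 2 * t * R2 + t^2 * nw^2 := by
      nlinarith [sq_nonneg (‖a + (t : ℂ) * w‖ - na), hsq]
    -- multiply hs by 2 na, hub by lam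
    have hs2 := mul_le_mul_of_nonneg_left hs (by linarith : (0:ℝ) ≤ 2 * na)
    have hub2 := mul_le_mul_of_nonneg_left hub (le_of_lt hlam)
    have step1 : 2 * na * (t * R1) ≤ na * C * t^2 * nw^2 + lam * (2 * t * R2 + t^2 * nw^2) := by
      nlinarith [hs2, hub2]
    have hidt : 2 * t * (na * R1 - lam * R2) = 2 * t * (na * nw^2) := by rw [hid]
    have step2 : 2 * t * (na * nw^2) ≤ t^2 * (na * C * nw^2 + lam * nw^2) := by
      nlinarith [step1, hidt]
    nlinarith [step2, mul_pos ht ht, ht]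
  -- conclude nw = 0
  have hK0 : 0 ≤ na * C * nw^2 + lam * nw^2 :=
    add_nonneg (mul_nonneg (mul_nonneg hna0.le hC0) (sq_nonneg nw))
      (mul_nonneg hlam.le (sq_nonneg nw))
  have hw0 : 2 * na * nw^2 ≤ 0 := by
    refine le_of_forall_pos_le_add fun ε hε => ?_
    have ht : 0 < ε / (na * C * nw^2 + lam * nw^2 + 1) := div_pos hε (by linarith)
    have h1 := hmain _ ht
    have h2 : (ε / (na * C * nw^2 + lam * nw^2 + 1)) * (na * C * nw^2 + lam * nw^2) ≤ ε := by
      rw [div_mul_eq_mul_div, div_le_iff₀ (by linarith)]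
      nlinarith
    linarith
  have hnw0 : w = 0 := by
    have h6 : nw ^ 2 ≤ 0 := by nlinarith [hw0, hna0]
    have h7 : nw ^ 2 = 0 := le_antisymm h6 (sq_nonneg nw)
    have h5 : nw = 0 := sq_eq_zero_iff.mp h7
    rw [hnw] at h5
    exact norm_eq_zero.mp h5
  rw [hw] at hnw0
  exact sub_eq_zero.mp hnw0

lemma lasso_grad_eq {M N : ℕ} (y : Fin M → ℂ) (A : Matrix (Fin M) (Fin N) ℂ)
    (lam : ℝ) (hlam : 0 < lam) (xh : Fin N → ℂ)
    (hmin : ∀ x, lassoObj y A lam xh ≤ lassoObj y A lam x) (i : Fin N) (hx : xh i ≠ 0) :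
    Aᴴ.mulVec (y - A.mulVec xh) i = ((lam / ‖xh i‖ : ℝ) : ℂ) * xh i := by
  refine grad_eq_core _ _ lam (∑ j, ‖A j i‖^2) hlam
    (Finset.sum_nonneg fun j _ => by positivity) hx fun c => ?_
  have := lasso_opt_ineq y A lam xh hmin i c
  linarith [this]

/-- on any index set `S`, the debiased LASSO detector at threshold `κ + λ/Λ`
declares at least as many indices active as the LASSO detector at threshold `κ`, and on the
complement `Sᶜ` it declares at most as many.  Hence at matched false alarm levels the debiased
LASSO detector's detection probability is at least that of the LASSO detector. -/
theorem debiasedLasso_detector_dominates {M N : ℕ} (y : Fin M → ℂ)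
    (A : Matrix (Fin M) (Fin N) ℂ) (lam : ℝ) (hlam : 0 < lam)
    (Lam : ℝ) (hLam : 0 < Lam) (κ : ℝ) (hκ : 0 ≤ κ) (xh : Fin N → ℂ)
    (hmin : ∀ x : Fin N → ℂ, lassoObj y A lam xh ≤ lassoObj y A lam x)
    (S : Finset (Fin N)) :
    (S.filter fun i => κ < ‖xh i‖).card ≤
        (S.filter fun i => κ + lam / Lam < ‖debiasedLasso y A Lam xh i‖).card ∧
      (Sᶜ.filter fun i => κ + lam / Lam < ‖debiasedLasso y A Lam xh i‖).card ≤
        (Sᶜ.filter fun i => κ < ‖xh i‖).card := by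
  have key : ∀ i : Fin N, κ < ‖xh i‖ ↔ κ + lam / Lam < ‖debiasedLasso y A Lam xh i‖ := by
    intro i
    have hd : debiasedLasso y A Lam xh i
        = xh i + ((1 / Lam : ℝ) : ℂ) * Aᴴ.mulVec (y - A.mulVec xh) i := by
      simp [debiasedLasso, Complex.real_smul]
    constructor
    · intro h
      have hx : xh i ≠ 0 := by
        intro h0; rw [h0, norm_zero] at h; linarith
      have hna0 : 0 < ‖xh i‖ := norm_pos_iff.mpr hx
      have hg := lasso_grad_eq y A lam hlam xh hmin i hx
      have hdi : debiasedLasso y A Lam xh i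
          = ((1 + lam / (Lam * ‖xh i‖) : ℝ) : ℂ) * xh i := by
        rw [hd, hg]
        push_cast
        have h1 : (Lam : ℂ) ≠ 0 := by
          simpa using ne_of_gt hLam
        have h2 : ((‖xh i‖ : ℝ) : ℂ) ≠ 0 := by
          simpa using ne_of_gt hna0
        field_simp
      have hrpos : (0:ℝ) < 1 + lam / (Lam * ‖xh i‖) := by positivity
      have hnorm : ‖debiasedLasso y A Lam xh i‖ = (1 + lam / (Lam * ‖xh i‖)) * ‖xh i‖ := by
        rw [hdi, norm_mul, Complex.norm_real, Real.norm_eq_abs, abs_of_pos hrpos]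
      have heq0 : lam / (Lam * ‖xh i‖) * ‖xh i‖ = lam / Lam := by
        rw [div_mul_eq_mul_div, mul_comm Lam, ← div_div, mul_div_assoc,
          div_self (ne_of_gt hna0), mul_one]
      have heq : (1 + lam / (Lam * ‖xh i‖)) * ‖xh i‖ = ‖xh i‖ + lam / Lam := by
        rw [add_mul, one_mul, heq0]
      rw [hnorm, heq]
      linarith
    · intro h
      have hb := lasso_grad_norm_le y A lam hlam xh hmin i
      have h2 : ‖debiasedLasso y A Lam xh i‖
          ≤ ‖xh i‖ + (1 / Lam) * ‖Aᴴ.mulVec (y - A.mulVec xh) i‖ := by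
        rw [hd]
        refine (norm_add_le _ _).trans ?_
        rw [norm_mul, Complex.norm_real, Real.norm_eq_abs, abs_of_pos (by positivity)]
      have h3 : (1 / Lam) * ‖Aᴴ.mulVec (y - A.mulVec xh) i‖ ≤ lam / Lam := by
        rw [div_eq_mul_inv lam Lam]
        have := mul_le_mul_of_nonneg_left hb (by positivity : (0:ℝ) ≤ 1 / Lam)
        calc (1 / Lam) * ‖Aᴴ.mulVec (y - A.mulVec xh) i‖ ≤ (1/Lam) * lam := this
          _ = lam * Lam⁻¹ := by ring
      linarith
  constructor
  · refine Finset.card_le_card fun i hi => ?_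
    simp only [Finset.mem_filter] at hi ⊢
    exact ⟨hi.1, (key i).mp hi.2⟩
  · refine Finset.card_le_card fun i hi => ?_
    simp only [Finset.mem_filter] at hi ⊢
    exact ⟨hi.1, (key i).mpr hi.2⟩
end

section
/- Let n ≥ 1, N ≥ 1, β > 0, σ ≥ 0, and let x₀, x₁, …, x_n ∈ ℂ^N and real numbers Q, q, m, ρ satisfy: x_a^H x_a = 2NQ for 1 ≤ a ≤ n; x_a^H x_b = 2Nq for 1 ≤ a ≠ b ≤ n; x₀^H x_a = x_a^H x₀ = 2Nm for 1 ≤ a ≤ n; and x₀^H x₀ = 2Nρ. Set u_a = x_a − x₀ for 1 ≤ a ≤ n and define L = (β²σ²/(2 + βnσ²)) (∑_{a=1}^n u_a)(∑_{a=1}^n u_a)^H − β ∑_{a=1}^n u_a u_a^H. Then: (i) L(∑_{a=1}^n u_a) = s₁ · ∑_{a=1}^n u_a with s₁ = −(4Nβ/(2 + βnσ²))·((Q − q) + n(q − 2m + ρ)); (ii) for every b ∈ {1, …, n}, L(∑_{a=1}^n u_a − n u_b) = −2Nβ(Q − q)·(∑_{a=1}^n u_a − n u_b); (iii) L v = 0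 for every v ∈ ℂ^N with u_a^H v = 0 for all 1 ≤ a ≤ n. -/
open Matrix Finset

/-- eigen-structure of the replica matrix `L`.  Under the replica-symmetric
overlap constraints on `x₀, x₁, …, xₙ ∈ ℂ^N`, with `uₐ = xₐ − x₀` and
`L = (β²σ²/(2 + βnσ²))(∑ₐ uₐ)(∑ₐ uₐ)ᴴ − β ∑ₐ uₐuₐᴴ`:
(i) `∑ₐ uₐ` is an eigenvector with eigenvalue `−(4Nβ/(2 + βnσ²))((Q−q) + n(q−2m+ρ))`;
(ii) each `∑ₐ uₐ − n·u_b` is an eigenvector with eigenvalue `−2Nβ(Q−q)`;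
(iii) `Lv = 0` for every `v` orthogonal to all the `uₐ`. -/
theorem replica_matrix_eigenvectors {n N : ℕ} (hn : 1 ≤ n) (hN : 1 ≤ N)
    (β σ : ℝ) (hβ : 0 < β) (hσ : 0 ≤ σ)
    (x0 : Fin N → ℂ) (xs : Fin n → Fin N → ℂ) (Q q m ρ : ℝ)
    (hQ : ∀ a, star (xs a) ⬝ᵥ xs a = ((2 * N * Q : ℝ) : ℂ))
    (hq : ∀ a b, a ≠ b → star (xs a) ⬝ᵥ xs b = ((2 * N * q : ℝ) : ℂ))
    (hm : ∀ a, star x0 ⬝ᵥ xs a = ((2 * N * m : ℝ) : ℂ))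
    (hm' : ∀ a, star (xs a) ⬝ᵥ x0 = ((2 * N * m : ℝ) : ℂ))
    (hρ : star x0 ⬝ᵥ x0 = ((2 * N * ρ : ℝ) : ℂ)) :
    let u : Fin n → Fin N → ℂ := fun a => xs a - x0
    let L : Matrix (Fin N) (Fin N) ℂ :=
      ((β ^ 2 * σ ^ 2 / (2 + β * n * σ ^ 2) : ℝ) : ℂ) •
          vecMulVec (∑ a, u a) (star (∑ a, u a)) -
        (β : ℂ) • ∑ a, vecMulVec (u a) (star (u a))
    (L.mulVec (∑ a, u a) =
        ((-(4 * N * β / (2 + β * n * σ ^ 2)) * ((Q - q) + n * (q - 2 * m + ρ)) : ℝ) : ℂ) •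
          ∑ a, u a) ∧
      (∀ b : Fin n,
        L.mulVec ((∑ a, u a) - (n : ℂ) • u b) =
          ((-(2 * N * β * (Q - q)) : ℝ) : ℂ) • ((∑ a, u a) - (n : ℂ) • u b)) ∧
      ∀ v : Fin N → ℂ, (∀ a, star (u a) ⬝ᵥ v = 0) → L.mulVec v = 0 := by
  intro u L
  have h2 : (2 + β * n * σ ^ 2) ≠ 0 := by positivity
  have h2c : ((2 : ℂ) + (β : ℂ) * (n : ℂ) * (σ : ℂ) ^ 2) ≠ 0 := by
    have := Complex.ofReal_ne_zero.mpr h2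
    push_cast at this
    exact this
  -- dot product with a sum
  have dps : ∀ (w : Fin N → ℂ) (f : Fin n → Fin N → ℂ),
      w ⬝ᵥ (∑ a, f a) = ∑ a, w ⬝ᵥ f a := by
    intro w f
    simp only [dotProduct, Finset.sum_apply, Finset.mul_sum]
    exact Finset.sum_comm
  have spd : ∀ (w : Fin N → ℂ) (f : Fin n → Fin N → ℂ),
      (∑ a, f a) ⬝ᵥ w = ∑ a, f a ⬝ᵥ w := by
    intro w f
    simp only [dotProduct, Finset.sum_apply, Finset.sum_mul]
    exact Finset.sum_comm
  -- rank-one action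
  have vmv : ∀ (w z v : Fin N → ℂ), (vecMulVec w z).mulVec v = (z ⬝ᵥ v) • w := by
    intro w z v
    funext i
    simp [vecMulVec, mulVec, dotProduct, Finset.mul_sum, mul_comm, mul_left_comm, mul_assoc]
  have hL : ∀ v, L.mulVec v =
      ((β ^ 2 * σ ^ 2 / (2 + β * n * σ ^ 2) : ℝ) : ℂ) •
        ((star (∑ a, u a) ⬝ᵥ v) • ∑ a, u a) -
      (β : ℂ) • ∑ a, (star (u a) ⬝ᵥ v) • u a := by
    intro v
    have hsum : (∑ a, vecMulVec (u a) (star (u a))).mulVec v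
        = ∑ a, (star (u a) ⬝ᵥ v) • u a := by
      funext i
      simp only [mulVec, dotProduct, Finset.sum_apply, Matrix.sum_apply, Finset.sum_mul]
      rw [Finset.sum_comm]
      refine Finset.sum_congr rfl fun a _ => ?_
      simp [vecMulVec, dotProduct, Finset.sum_mul, mul_comm, mul_left_comm, mul_assoc]
    simp only [L, Matrix.sub_mulVec, Matrix.smul_mulVec, vmv, hsum]
  -- overlaps
  have huu : ∀ a b, star (u a) ⬝ᵥ u b =
      (if a = b then ((2 * N * (Q - 2 * m + ρ) : ℝ) : ℂ)
        else ((2 * N * (q - 2 * m + ρ) : ℝ) : ℂ)) := by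
    intro a b
    have hst : star (u a) = star (xs a) - star x0 := by
      simp [u, star_sub]
    by_cases h : a = b
    · subst h
      simp only [u, hst, sub_dotProduct, dotProduct_sub, hQ, hm a, hm' a, hρ, if_pos rfl]
      push_cast; ring
    · simp only [u, hst, sub_dotProduct, dotProduct_sub, hq a b h, hm b, hm' a, hρ, if_neg h]
      push_cast; ring
  have hT : ∀ a, star (u a) ⬝ᵥ (∑ b, u b)
      = ((2 * N * ((Q - q) + n * (q - 2 * m + ρ)) : ℝ) : ℂ) := by
    intro a
    rw [dps]
    simp only [huu]
    rw [← Finset.add_sum_erase _ _ (Finset.mem_univ a), if_pos rfl,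
      Finset.sum_congr rfl (fun b hb => if_neg (Finset.ne_of_mem_erase hb).symm),
      Finset.sum_const, Finset.card_erase_of_mem (Finset.mem_univ a),
      Finset.card_univ, Fintype.card_fin, nsmul_eq_mul, Nat.cast_sub hn]
    push_cast; ring
  have hSS : star (∑ a, u a) ⬝ᵥ (∑ b, u b)
      = (n : ℂ) * ((2 * N * ((Q - q) + n * (q - 2 * m + ρ)) : ℝ) : ℂ) := by
    rw [star_sum, spd]
    simp [hT, Finset.sum_const, Fintype.card_fin]
  refine ⟨?_, ?_, ?_⟩
  · -- part (i)
    rw [hL, hSS]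
    simp only [hT, ← Finset.smul_sum]
    match_scalars
    push_cast
    have hinv : ((2 : ℂ) + (β : ℂ) * (n : ℂ) * (σ : ℂ) ^ 2) * ((2 : ℂ) + (β : ℂ) * (n : ℂ) * (σ : ℂ) ^ 2)⁻¹ = 1 :=
      mul_inv_cancel₀ h2c
    linear_combination ((β : ℂ) * (2 * (N : ℂ) * (((Q : ℂ) - q) + (n : ℂ) * ((q : ℂ) - 2 * m + ρ)))) * hinv
  · -- part (ii)
    intro b
    rw [hL]
    have hcol : (∑ a, star (u a) ⬝ᵥ u b)
        = ((2 * N * ((Q - q) + n * (q - 2 * m + ρ)) : ℝ) : ℂ) := by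
      simp only [huu]
      rw [← Finset.add_sum_erase _ _ (Finset.mem_univ b), if_pos rfl,
        Finset.sum_congr rfl (fun c hc => if_neg (Finset.ne_of_mem_erase hc)),
        Finset.sum_const, Finset.card_erase_of_mem (Finset.mem_univ b),
        Finset.card_univ, Fintype.card_fin, nsmul_eq_mul, Nat.cast_sub hn]
      push_cast; ring
    have hw1 : star (∑ a, u a) ⬝ᵥ ((∑ a, u a) - (n : ℂ) • u b) = 0 := by
      rw [dotProduct_sub, dotProduct_smul, hSS, star_sum, spd, hcol, smul_eq_mul, sub_self]
    have hw : ∀ a, star (u a) ⬝ᵥ ((∑ c, u c) - (n : ℂ) • u b)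
        = if a = b then ((2 * N * (Q - q) * (1 - (n : ℝ)) : ℝ) : ℂ)
          else ((2 * N * (Q - q) : ℝ) : ℂ) := by
      intro a
      rw [dotProduct_sub, dotProduct_smul, hT a, huu a b, smul_eq_mul]
      by_cases h : a = b
      · rw [if_pos h, if_pos h]; push_cast; ring
      · rw [if_neg h, if_neg h]; push_cast; ring
    have hsum2 : (∑ a, (star (u a) ⬝ᵥ ((∑ c, u c) - (n : ℂ) • u b)) • u a)
        = ((2 * N * (Q - q) * (1 - (n : ℝ)) : ℝ) : ℂ) • u b
          + ((2 * N * (Q - q) : ℝ) : ℂ) • ((∑ a, u a) - u b) := by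
      simp only [hw]
      rw [← Finset.add_sum_erase _ _ (Finset.mem_univ b), if_pos rfl]
      congr 1
      rw [Finset.sum_congr rfl (fun c hc => by rw [if_neg (Finset.ne_of_mem_erase hc)]),
        ← Finset.smul_sum, Finset.sum_erase_eq_sub (Finset.mem_univ b)]
    rw [hw1, hsum2]
    match_scalars <;> (push_cast; ring)
  · -- part (iii)
    intro v hv
    rw [hL]
    have h1 : star (∑ a, u a) ⬝ᵥ v = 0 := by
      rw [star_sum, spd]
      simp [hv]
    rw [h1]
    simp only [hv, zero_smul, smul_zero, Finset.sum_const_zero, smul_zero, sub_zero]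
end
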